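/- arXiv:1907.09550 — 4 statements merged into one kernel-verified Lean document; each statement's English description precedes it below -/
import Mathlib

section
/- If a combinatorial Morse function g is equivalent to f (i.e., induces the same gradient vector field), and h is defined by h(σ) = min over all nonnegative-integer-valued Morse functions g' equivalent to f of g'(σ), then h is itself a combinatorial Morse function equivalent to f. -/
open Finset

variable {V : Type*}

/-- A finite abstract simplicial complex: a finite family of nonempty finite vertex sets
closed under passing to nonempty subsets. -/
def IsComplex [DecidableEq V] (K : Finset (Finset V)) : Prop :=
  (∀ σ ∈ K, σ.Nonempty) ∧ ∀ σ ∈ K, ∀ τ : Finset V, τ ⊆ σ → τ.Nonempty → τ ∈ K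

/-- Dimension of a simplex. -/
def dimS (σ : Finset V) : ℕ := σ.card - 1

/-- `σ` is an immediate face (facet) of `τ`. -/
def Facet [DecidableEq V] (σ τ : Finset V) : Prop := σ ⊆ τ ∧ σ.card + 1 = τ.card

instance [DecidableEq V] (σ τ : Finset V) : Decidable (Facet σ τ) := by
  unfold Facet; infer_instance

/-- A discrete (combinatorial) Morse function in the sense of Forman. -/
def IsMorse [DecidableEq V] {α : Type*} [LinearOrder α]
    (K : Finset (Finset V)) (f : Finset V → α) : Prop :=
  ∀ σ ∈ K,
    (K.filter (fun τ => Facet σ τ ∧ f τ ≤ f σ)).card ≤ 1 ∧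
    (K.filter (fun ν => Facet ν σ ∧ f σ ≤ f ν)).card ≤ 1

/-- Two discrete Morse functions are equivalent (induce the same gradient field). -/
def MorseEquiv [DecidableEq V] {α β : Type*} [LinearOrder α] [LinearOrder β]
    (K : Finset (Finset V)) (f : Finset V → α) (g : Finset V → β) : Prop :=
  ∀ σ ∈ K, ∀ τ ∈ K, Facet σ τ → (f σ < f τ ↔ g σ < g τ)

/-- A gradient pair of `f`. -/
def GradPair [DecidableEq V] (K : Finset (Finset V)) (f : Finset V → ℝ)
    (σ τ : Finset V) : Prop :=
  σ ∈ K ∧ τ ∈ K ∧ Facet σ τ ∧ f τ ≤ f σ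

/-- The normalization `h_f` of a discrete Morse function `f`. -/
noncomputable def normalization [DecidableEq V] (K : Finset (Finset V))
    (f : Finset V → ℝ) (σ : Finset V) : ℕ :=
  sInf {n : ℕ | ∃ g : Finset V → ℕ, IsMorse K g ∧ MorseEquiv K f g ∧ g σ = n}

/-- A critical simplex of `f`. -/
def IsCritical [DecidableEq V] {α : Type*} [LinearOrder α]
    (K : Finset (Finset V)) (f : Finset V → α) (σ : Finset V) : Prop :=
  σ ∈ K ∧ (∀ τ ∈ K, Facet σ τ → f σ < f τ) ∧ (∀ ν ∈ K, Facet ν σ → f ν < f σ)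

instance [DecidableEq V] {α : Type*} [LinearOrder α]
    (K : Finset (Finset V)) (f : Finset V → α) (σ : Finset V) :
    Decidable (IsCritical K f σ) := by
  unfold IsCritical; infer_instance

/-- The alternating sum of `h_f` over all simplices of `K`. -/
noncomputable def morseSum [DecidableEq V] (K : Finset (Finset V)) (f : Finset V → ℝ) : ℤ :=
  ∑ σ ∈ K, (-1 : ℤ) ^ (dimS σ) * (normalization K f σ : ℤ)

/-- The alternating sum of `h_f` over the critical simplices of `f`. -/
noncomputable def critSum [DecidableEq V] (K : Finset (Finset V)) (f : Finset V → ℝ) : ℤ :=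
  ∑ σ ∈ K.filter (fun σ => IsCritical K f σ),
    (-1 : ℤ) ^ (dimS σ) * (normalization K f σ : ℤ)

/-- Number of critical simplices of `f`. -/
noncomputable def numCritical [DecidableEq V] (K : Finset (Finset V)) (f : Finset V → ℝ) : ℕ :=
  (K.filter (fun σ => IsCritical K f σ)).card

/-- An optimal discrete Morse function minimizes the number of critical simplices. -/
def IsOptimal [DecidableEq V] (K : Finset (Finset V)) (f : Finset V → ℝ) : Prop :=
  IsMorse K f ∧ ∀ g : Finset V → ℝ, IsMorse K g → numCritical K f ≤ numCritical K g

/-- The invariant `𝔑(K)`: minimum of `|𝔑(K,f)|` over optimal Morse functions. -/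
noncomputable def NK [DecidableEq V] (K : Finset (Finset V)) : ℕ :=
  sInf {n : ℕ | ∃ f : Finset V → ℝ, IsOptimal K f ∧ n = (critSum K f).natAbs}

/-- An elementary collapse removing the free pair `(σ, τ)`. -/
def CollapseStep [DecidableEq V] (K K' : Finset (Finset V)) : Prop :=
  ∃ σ τ, σ ∈ K ∧ τ ∈ K ∧ Facet σ τ ∧ (∀ ρ ∈ K, σ ⊂ ρ → ρ = τ) ∧
    K' = (K.erase σ).erase τ

/-- Collapsibility: `K` collapses to a point by elementary collapses. -/
def Collapsible [DecidableEq V] (K : Finset (Finset V)) : Prop :=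
  ∃ v : V, Relation.ReflTransGen CollapseStep K {{v}}

/-- Connectivity of a complex. -/
def ComplexConnected [DecidableEq V] (K : Finset (Finset V)) : Prop :=
  K.Nonempty ∧ ∀ u v : V, {u} ∈ K → {v} ∈ K →
    Relation.ReflTransGen (fun a b => ({a, b} : Finset V) ∈ K) u v

/-- Signed incidence number `⟨∂τ, ν⟩` of an immediate face. -/
noncomputable def bsign [DecidableEq V] [LinearOrder V] (ν τ : Finset V) : ℝ :=
  if Facet ν τ then ∑ v ∈ τ \ ν, (-1 : ℝ) ^ ((τ.filter (fun u => u < v)).card) else 0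

/-- The simplicial boundary of a real chain `c` supported on `K`. -/
noncomputable def bnd [DecidableEq V] [LinearOrder V] (K : Finset (Finset V))
    (c : Finset V → ℝ) (ν : Finset V) : ℝ :=
  ∑ τ ∈ K, bsign ν τ * c τ

/-- A `k`-chain of `K`. -/
def IsChainOf (K : Finset (Finset V)) (k : ℕ) (c : Finset V → ℝ) : Prop :=
  ∀ τ, c τ ≠ 0 → τ ∈ K ∧ τ.card = k + 1

/-- `H₂(K; ℝ) = 0` for a complex of dimension `≤ 2`: every 2-cycle is zero. -/
def H2Zero [DecidableEq V] [LinearOrder V] (K : Finset (Finset V)) : Prop :=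
  ∀ c : Finset V → ℝ, IsChainOf K 2 c → (∀ ν, bnd K c ν = 0) → ∀ τ, c τ = 0

/-- `H₁(K; ℝ) = 0`: every 1-cycle is a boundary. -/
def H1Zero [DecidableEq V] [LinearOrder V] (K : Finset (Finset V)) : Prop :=
  ∀ c : Finset V → ℝ, IsChainOf K 1 c → (∀ ν, bnd K c ν = 0) →
    ∃ d : Finset V → ℝ, IsChainOf K 2 d ∧ ∀ ν, bnd K d ν = c ν

/-- Acyclicity (all reduced real homology vanishes) for a complex of dimension `≤ 2`. -/
def Acyclic [DecidableEq V] [LinearOrder V] (K : Finset (Finset V)) : Prop :=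
  ComplexConnected K ∧ H1Zero K ∧ H2Zero K

/-- Euler characteristic. -/
def eulerChar (K : Finset (Finset V)) : ℤ :=
  ∑ σ ∈ K, (-1 : ℤ) ^ (dimS σ)

/-- Gradient paths: `GPath K f σ₀ σᵣ p` says `p = [σ₀, τ₀, σ₁, τ₁, …, σᵣ]` is a gradient
path of `f` from `σ₀` to `σᵣ`. -/
inductive GPath [DecidableEq V] (K : Finset (Finset V)) (f : Finset V → ℝ) :
    Finset V → Finset V → List (Finset V) → Prop
  | nil : ∀ σ, σ ∈ K → GPath K f σ σ [σ]
  | cons : ∀ σ τ σ' e l, σ ∈ K → τ ∈ K → Facet σ τ → f τ ≤ f σ → Facet σ' τ → σ' ≠ σ →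
      GPath K f σ' e l → GPath K f σ e (σ :: τ :: l)

/-- Multiplicity (weight) of a gradient path, following Forman. -/
noncomputable def pweight [DecidableEq V] [LinearOrder V] : List (Finset V) → ℝ
  | σ :: τ :: rest => (-(bsign σ τ) * bsign rest.headI τ) * pweight rest
  | _ => 1

/-- The coefficient `λ^τ_σ` of `σ` in the Morse-complex boundary of `τ`. -/
noncomputable def morseCoeff [DecidableEq V] [LinearOrder V] (K : Finset (Finset V))
    (f : Finset V → ℝ) (τ σ : Finset V) : ℝ :=
  ∑ᶠ p ∈ {p : List (Finset V) | Facet p.headI τ ∧ GPath K f p.headI σ p},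
    bsign p.headI τ * pweight p

/-- One stellar subdivision step (at `σ`, with new vertex `v`). -/
def StellarStep (K K' : Finset (Finset ℕ)) : Prop :=
  ∃ σ v, σ ∈ K ∧ 2 ≤ σ.card ∧ (∀ τ ∈ K, v ∉ τ) ∧
    K' = K.filter (fun τ => ¬ σ ⊆ τ) ∪
      (K.filter (fun τ => σ ⊆ τ)).biUnion
        (fun τ => (σ.powerset.filter (fun μ => μ ≠ σ)).image
          (fun μ => insert v ((τ \ σ) ∪ μ)))

/-- Subdivisions (iterated stellar subdivisions). -/
def Subdivision (K L : Finset (Finset ℕ)) : Prop :=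
  Relation.ReflTransGen StellarStep K L

/-- `Ñ(K)`: the minimum of `𝔑(L)` over subdivisions `L` of `K`. -/
noncomputable def NtildeK (K : Finset (Finset ℕ)) : ℕ :=
  sInf {n : ℕ | ∃ L, Subdivision K L ∧ n = NK L}
section AuxNorm

variable [DecidableEq V]

lemma morseEquiv_le {α β : Type*} [LinearOrder α] [LinearOrder β]
    {K : Finset (Finset V)} {f : Finset V → α} {g : Finset V → β}
    (h : MorseEquiv K f g) : ∀ σ ∈ K, ∀ τ ∈ K, Facet σ τ → (f τ ≤ f σ ↔ g τ ≤ g σ) := by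
  intro σ hσ τ hτ hft
  rw [← not_lt, ← not_lt, h σ hσ τ hτ hft]

lemma isMorse_of_equiv {α β : Type*} [LinearOrder α] [LinearOrder β]
    {K : Finset (Finset V)} {f : Finset V → α} {g : Finset V → β}
    (hf : IsMorse K f) (h : MorseEquiv K f g) : IsMorse K g := by
  intro σ hσ
  obtain ⟨h1, h2⟩ := hf σ hσ
  constructor
  · have he : K.filter (fun τ => Facet σ τ ∧ g τ ≤ g σ)
        = K.filter (fun τ => Facet σ τ ∧ f τ ≤ f σ) := by
      apply Finset.filter_congr
      intro τ hτ
      constructor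
      · rintro ⟨hft, hle⟩; exact ⟨hft, (morseEquiv_le h σ hσ τ hτ hft).2 hle⟩
      · rintro ⟨hft, hle⟩; exact ⟨hft, (morseEquiv_le h σ hσ τ hτ hft).1 hle⟩
    rw [he]; exact h1
  · have he : K.filter (fun ν => Facet ν σ ∧ g σ ≤ g ν)
        = K.filter (fun ν => Facet ν σ ∧ f σ ≤ f ν) := by
      apply Finset.filter_congr
      intro ν hν
      constructor
      · rintro ⟨hft, hle⟩; exact ⟨hft, (morseEquiv_le h ν hν σ hσ hft).2 hle⟩
      · rintro ⟨hft, hle⟩; exact ⟨hft, (morseEquiv_le h ν hν σ hσ hft).1 hle⟩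
    rw [he]; exact h2

/-- There is at least one ℕ-valued Morse function equivalent to `f`. -/
lemma exists_nat_morse {K : Finset (Finset V)} {f : Finset V → ℝ}
    (hf : IsMorse K f) :
    ∃ g : Finset V → ℕ, IsMorse K g ∧ MorseEquiv K f g := by
  classical
  set g : Finset V → ℕ := fun σ => ((K.image f).filter (fun x => x ≤ f σ)).card with hg
  have hequiv : MorseEquiv K f g := by
    intro σ hσ τ hτ _
    constructor
    · intro hlt
      apply Finset.card_lt_card
      constructor
      · intro x hx
        simp only [Finset.mem_filter] at hx ⊢
        exact ⟨hx.1, hx.2.trans hlt.le⟩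
      · intro hsub
        have : f τ ∈ (K.image f).filter (fun x => x ≤ f τ) := by
          simp only [Finset.mem_filter]
          exact ⟨Finset.mem_image_of_mem f hτ, le_refl _⟩
        have := hsub this
        simp only [Finset.mem_filter] at this
        exact absurd this.2 (not_le.2 hlt)
    · intro hlt
      by_contra hnf
      push_neg at hnf
      have : g τ ≤ g σ := by
        apply Finset.card_le_card
        intro x hx
        simp only [Finset.mem_filter] at hx ⊢
        exact ⟨hx.1, hx.2.trans hnf⟩
      exact absurd hlt (not_lt.2 this)
  exact ⟨g, isMorse_of_equiv hf hequiv, hequiv⟩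

/-- Pointwise min of two equivalent Morse functions is again equivalent. -/
lemma morseEquiv_min {K : Finset (Finset V)} {f : Finset V → ℝ} {g₁ g₂ : Finset V → ℕ}
    (h₁ : MorseEquiv K f g₁) (h₂ : MorseEquiv K f g₂) :
    MorseEquiv K f (fun σ => min (g₁ σ) (g₂ σ)) := by
  intro σ hσ τ hτ hft
  constructor
  · intro hlt
    have a := (h₁ σ hσ τ hτ hft).1 hlt
    have b := (h₂ σ hσ τ hτ hft).1 hlt
    exact lt_min (lt_of_le_of_lt (min_le_left _ _) a) (lt_of_le_of_lt (min_le_right _ _) b)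
  · intro hlt
    by_contra hnf
    push_neg at hnf
    have a := (morseEquiv_le h₁ σ hσ τ hτ hft).1 hnf
    have b := (morseEquiv_le h₂ σ hσ τ hτ hft).1 hnf
    exact absurd hlt (not_lt.2 (min_le_min a b))

lemma normSet_nonempty {K : Finset (Finset V)} {f : Finset V → ℝ}
    (hf : IsMorse K f) (σ : Finset V) :
    {n : ℕ | ∃ g : Finset V → ℕ, IsMorse K g ∧ MorseEquiv K f g ∧ g σ = n}.Nonempty := by
  obtain ⟨g, hm, he⟩ := exists_nat_morse hf
  exact ⟨g σ, g, hm, he, rfl⟩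

/-- A single Morse function realizing the normalization bound on any finite set. -/
lemma exists_min_realizer {K : Finset (Finset V)} {f : Finset V → ℝ}
    (hf : IsMorse K f) (S : Finset (Finset V)) :
    ∃ G : Finset V → ℕ, IsMorse K G ∧ MorseEquiv K f G ∧
      ∀ σ ∈ S, G σ ≤ normalization K f σ := by
  classical
  induction S using Finset.induction with
  | empty =>
      obtain ⟨g, hm, he⟩ := exists_nat_morse hf
      exact ⟨g, hm, he, by simp⟩
  | insert a S hnotmem ih =>
      obtain ⟨G, hGm, hGe, hGle⟩ := ih
      have hmem := Nat.sInf_mem (normSet_nonempty hf a)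
      obtain ⟨ga, hgam, hgae, hgaa⟩ := hmem
      refine ⟨fun σ => min (G σ) (ga σ), isMorse_of_equiv hf (morseEquiv_min hGe hgae),
        morseEquiv_min hGe hgae, ?_⟩
      intro σ hσ
      rcases Finset.mem_insert.1 hσ with rfl | hσS
      · calc min (G σ) (ga σ) ≤ ga σ := min_le_right _ _
          _ = normalization K f σ := hgaa
      · exact (min_le_left _ _).trans (hGle σ hσS)

end AuxNorm

/-- The normalization `h_f` is itself a combinatorial Morse function
equivalent to `f`. -/
theorem normalization_isMorse_and_equiv {V : Type*} [DecidableEq V]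
    (K : Finset (Finset V)) (hK : IsComplex K) (hconn : ComplexConnected K)
    (f : Finset V → ℝ) (hf : IsMorse K f) :
    IsMorse K (normalization K f) ∧ MorseEquiv K f (normalization K f) := by
  classical
  obtain ⟨G, hGm, hGe, hGle⟩ := exists_min_realizer hf K
  have heq : ∀ σ ∈ K, normalization K f σ = G σ := by
    intro σ hσ
    have h1 : normalization K f σ ≤ G σ := Nat.sInf_le ⟨G, hGm, hGe, rfl⟩
    exact le_antisymm h1 (hGle σ hσ)
  have hequiv : MorseEquiv K f (normalization K f) := by
    intro σ hσ τ hτ hft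
    rw [heq σ hσ, heq τ hτ]
    exact hGe σ hσ τ hτ hft
  exact ⟨isMorse_of_equiv hf hequiv, hequiv⟩
end

section
/- If σ ≺ τ and f(σ) ≥ f(τ) (i.e., (σ,τ) is a gradient pair of f), then the normalization satisfies h_f(σ) = h_f(τ). -/
open Finset

variable {V : Type*}

section Aux

variable [DecidableEq V]

/-- A measure that decreases along both kinds of moves of a gradient path. -/
noncomputable def meas (K : Finset (Finset V)) (f : Finset V → ℝ) (ρ : Finset V) : ℕ :=
  (K.filter (fun μ => f μ < f ρ ∨ (f μ = f ρ ∧ ρ.card < μ.card))).card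

lemma meas_lt_down {K : Finset (Finset V)} {f : Finset V → ℝ} {μ ρ : Finset V}
    (hμ : μ ∈ K) (hlt : f μ < f ρ) : meas K f μ < meas K f ρ := by
  apply Finset.card_lt_card
  constructor
  · intro ν hν
    simp only [Finset.mem_filter] at hν ⊢
    refine ⟨hν.1, Or.inl ?_⟩
    rcases hν.2 with h | h
    · exact h.trans hlt
    · exact h.1 ▸ hlt
  · intro hsub
    have : μ ∈ K.filter (fun ν => f ν < f ρ ∨ (f ν = f ρ ∧ ρ.card < ν.card)) := by
      simp [hμ, hlt]
    have := hsub this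
    simp at this

lemma meas_lt_up {K : Finset (Finset V)} {f : Finset V → ℝ} {κ ρ : Finset V}
    (hκ : κ ∈ K) (hle : f κ ≤ f ρ) (hcard : ρ.card < κ.card) :
    meas K f κ < meas K f ρ := by
  apply Finset.card_lt_card
  constructor
  · intro ν hν
    simp only [Finset.mem_filter] at hν ⊢
    refine ⟨hν.1, ?_⟩
    rcases lt_or_eq_of_le hle with hlt | heq
    · rcases hν.2 with h | h
      · exact Or.inl (h.trans hlt)
      · exact Or.inl (h.1 ▸ hlt)
    · rcases hν.2 with h | h
      · exact Or.inl (heq ▸ h)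
      · exact Or.inr ⟨heq ▸ h.1, hcard.trans h.2⟩
  · intro hsub
    have : κ ∈ K.filter (fun ν => f ν < f ρ ∨ (f ν = f ρ ∧ ρ.card < ν.card)) := by
      simp only [Finset.mem_filter]
      refine ⟨hκ, ?_⟩
      rcases lt_or_eq_of_le hle with hlt | heq
      · exact Or.inl hlt
      · exact Or.inr ⟨heq, hcard⟩
    have := hsub this
    simp at this

/-- The canonical minimal normalization: longest number of strict descents along a
gradient path starting at `ρ`. -/
noncomputable def hfun (K : Finset (Finset V)) (f : Finset V → ℝ) (ρ : Finset V) : ℕ :=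
  max ((K.filter (fun μ => Facet μ ρ ∧ f μ < f ρ)).attach.sup
        (fun μ => hfun K f μ.1 + 1))
      ((K.filter (fun κ => Facet ρ κ ∧ f κ ≤ f ρ)).attach.sup
        (fun κ => hfun K f κ.1))
termination_by meas K f ρ
decreasing_by
  · have h := μ.2
    simp only [Finset.mem_filter] at h
    exact meas_lt_down h.1 h.2.2
  · have h := κ.2
    simp only [Finset.mem_filter] at h
    exact meas_lt_up h.1 h.2.2 (by have := h.2.1.2; omega)

lemma hfun_down {K : Finset (Finset V)} {f : Finset V → ℝ} {μ ρ : Finset V}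
    (hμ : μ ∈ K) (hft : Facet μ ρ) (hlt : f μ < f ρ) :
    hfun K f μ + 1 ≤ hfun K f ρ := by
  conv_rhs => rw [hfun]
  refine le_trans ?_ (le_max_left _ _)
  exact Finset.le_sup (f := fun x => hfun K f x.1 + 1)
    (Finset.mem_attach (K.filter (fun μ' => Facet μ' ρ ∧ f μ' < f ρ))
      ⟨μ, Finset.mem_filter.mpr ⟨hμ, hft, hlt⟩⟩)

lemma hfun_up {K : Finset (Finset V)} {f : Finset V → ℝ} {κ ρ : Finset V}
    (hκ : κ ∈ K) (hft : Facet ρ κ) (hle : f κ ≤ f ρ) :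
    hfun K f κ ≤ hfun K f ρ := by
  conv_rhs => rw [hfun]
  refine le_trans ?_ (le_max_right _ _)
  exact Finset.le_sup (f := fun x => hfun K f x.1)
    (Finset.mem_attach (K.filter (fun κ' => Facet ρ κ' ∧ f κ' ≤ f ρ))
      ⟨κ, Finset.mem_filter.mpr ⟨hκ, hft, hle⟩⟩)

lemma hfun_le {K : Finset (Finset V)} {f : Finset V → ℝ} {ρ : Finset V} {n : ℕ}
    (hdown : ∀ μ ∈ K, Facet μ ρ → f μ < f ρ → hfun K f μ + 1 ≤ n)
    (hup : ∀ κ ∈ K, Facet ρ κ → f κ ≤ f ρ → hfun K f κ ≤ n) :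
    hfun K f ρ ≤ n := by
  rw [hfun]
  apply max_le
  · apply Finset.sup_le
    intro x _
    have h := x.2
    simp only [Finset.mem_filter] at h
    exact hdown x.1 h.1 h.2.1 h.2.2
  · apply Finset.sup_le
    intro x _
    have h := x.2
    simp only [Finset.mem_filter] at h
    exact hup x.1 h.1 h.2.1 h.2.2

lemma hfun_equiv (K : Finset (Finset V)) (f : Finset V → ℝ) :
    MorseEquiv K f (hfun K f) := by
  intro ν hν ρ hρ hft
  constructor
  · intro hlt
    exact lt_of_lt_of_le (Nat.lt_succ_self _) (hfun_down hν hft hlt)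
  · intro hlt
    by_contra hcon
    push_neg at hcon
    exact absurd (hfun_up hρ hft hcon) (not_le.mpr hlt)

lemma morse_of_equiv {K : Finset (Finset V)} {f : Finset V → ℝ} {g : Finset V → ℕ}
    (hf : IsMorse K f) (he : MorseEquiv K f g) : IsMorse K g := by
  intro σ hσ
  obtain ⟨h1, h2⟩ := hf σ hσ
  constructor
  · have : K.filter (fun τ => Facet σ τ ∧ g τ ≤ g σ)
        = K.filter (fun τ => Facet σ τ ∧ f τ ≤ f σ) := by
      apply Finset.filter_congr
      intro τ hτ
      constructor
      · rintro ⟨hft, hle⟩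
        refine ⟨hft, not_lt.mp fun hc => ?_⟩
        exact absurd ((he σ hσ τ hτ hft).mp hc) (not_lt.mpr hle)
      · rintro ⟨hft, hle⟩
        refine ⟨hft, not_lt.mp fun hc => ?_⟩
        exact absurd ((he σ hσ τ hτ hft).mpr hc) (not_lt.mpr hle)
    rw [this]; exact h1
  · have : K.filter (fun ν => Facet ν σ ∧ g σ ≤ g ν)
        = K.filter (fun ν => Facet ν σ ∧ f σ ≤ f ν) := by
      apply Finset.filter_congr
      intro ν hν
      constructor
      · rintro ⟨hft, hle⟩
        refine ⟨hft, not_lt.mp fun hc => ?_⟩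
        exact absurd ((he ν hν σ hσ hft).mp hc) (not_lt.mpr hle)
      · rintro ⟨hft, hle⟩
        refine ⟨hft, not_lt.mp fun hc => ?_⟩
        exact absurd ((he ν hν σ hσ hft).mpr hc) (not_lt.mpr hle)
    rw [this]; exact h2

lemma hfun_min_aux {K : Finset (Finset V)} {f : Finset V → ℝ} {g : Finset V → ℕ}
    (he : MorseEquiv K f g) :
    ∀ n : ℕ, ∀ ρ ∈ K, meas K f ρ < n → hfun K f ρ ≤ g ρ := by
  intro n
  induction n with
  | zero => intro ρ _ h; omega
  | succ n ih =>
    intro ρ hρ hm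
    apply hfun_le
    · intro μ hμ hft hlt
      have h1 : hfun K f μ ≤ g μ :=
        ih μ hμ (by have := meas_lt_down (K := K) hμ hlt; omega)
      have h2 : g μ < g ρ := (he μ hμ ρ hρ hft).mp hlt
      omega
    · intro κ hκ hft hle
      have hcard : ρ.card < κ.card := by have := hft.2; omega
      have h1 : hfun K f κ ≤ g κ :=
        ih κ hκ (by have := meas_lt_up (K := K) hκ hle hcard; omega)
      have h2 : g κ ≤ g ρ := by
        by_contra hc
        push_neg at hc
        have := (he ρ hρ κ hκ hft).mpr hc
        exact absurd hle (not_le.mpr this)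
      omega

lemma hfun_min {K : Finset (Finset V)} {f : Finset V → ℝ} {g : Finset V → ℕ}
    (he : MorseEquiv K f g) {ρ : Finset V} (hρ : ρ ∈ K) : hfun K f ρ ≤ g ρ :=
  hfun_min_aux he (meas K f ρ + 1) ρ hρ (Nat.lt_succ_self _)

lemma hfun_pair_aux {K : Finset (Finset V)} {f : Finset V → ℝ}
    (hK : IsComplex K) (hf : IsMorse K f) :
    ∀ n : ℕ, ∀ σ τ : Finset V, σ ∈ K → τ ∈ K → Facet σ τ → f τ ≤ f σ →
      meas K f τ < n → hfun K f σ = hfun K f τ := by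
  intro n
  induction n with
  | zero => intro σ τ _ _ _ _ h; omega
  | succ n ih =>
    intro σ τ hσ hτ hft hge hm
    refine le_antisymm ?_ (hfun_up hτ hft hge)
    apply hfun_le
    · -- strict descent from σ to μ : route it through τ via the diamond
      intro μ hμ hftμ hlt
      -- τ \ σ is a single vertex y
      have hcard : (τ \ σ).card = 1 := by
        rw [Finset.card_sdiff_of_subset hft.1]
        have := hft.2
        omega
      obtain ⟨y, hy⟩ := Finset.card_eq_one.mp hcard
      have hyτ : y ∈ τ := by
        have : y ∈ τ \ σ := hy ▸ Finset.mem_singleton_self y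
        exact (Finset.mem_sdiff.mp this).1
      have hyσ : y ∉ σ := by
        have : y ∈ τ \ σ := hy ▸ Finset.mem_singleton_self y
        exact (Finset.mem_sdiff.mp this).2
      have hyμ : y ∉ μ := fun h => hyσ (hftμ.1 h)
      set σ' : Finset V := insert y μ with hσ'def
      have hσ'card : σ'.card = μ.card + 1 := Finset.card_insert_of_notMem hyμ
      have hσ'sub : σ' ⊆ τ := by
        intro x hx
        rcases Finset.mem_insert.mp hx with h | h
        · exact h ▸ hyτ
        · exact hft.1 (hftμ.1 h)
      have hσ'K : σ' ∈ K :=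
        hK.2 τ hτ σ' hσ'sub ⟨y, Finset.mem_insert_self y μ⟩
      have hftμσ' : Facet μ σ' :=
        ⟨Finset.subset_insert y μ, hσ'card.symm⟩
      have hftσ'τ : Facet σ' τ := by
        refine ⟨hσ'sub, ?_⟩
        have h1 := hftμ.2
        have h2 := hft.2
        omega
      have hne : σ' ≠ σ := fun h => hyσ (h ▸ Finset.mem_insert_self y μ)
      -- f σ' < f τ, since (σ, τ) is the unique gradient pair at τ
      have hflt : f σ' < f τ := by
        by_contra hc
        push_neg at hc
        have hmem1 : σ' ∈ K.filter (fun ν => Facet ν τ ∧ f τ ≤ f ν) := by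
          simp [hσ'K, hftσ'τ, hc]
        have hmem2 : σ ∈ K.filter (fun ν => Facet ν τ ∧ f τ ≤ f ν) := by
          simp [hσ, hft, hge]
        have hcard1 := (hf τ hτ).2
        exact hne (Finset.card_le_one.mp hcard1 _ hmem1 _ hmem2)
      -- h σ' ≥ h μ
      have hkey : hfun K f μ ≤ hfun K f σ' := by
        rcases lt_or_ge (f μ) (f σ') with h | h
        · exact le_trans (Nat.le_succ _) (hfun_down hμ hftμσ' h)
        · have hmeas : meas K f σ' < n := by
            have := meas_lt_down (K := K) hσ'K hflt
            omega
          exact le_of_eq (ih μ σ' hμ hσ'K hftμσ' h hmeas)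
      have := hfun_down hσ'K hftσ'τ hflt
      omega
    · -- the pairing move from σ can only go to τ
      intro κ hκ hftκ hle
      have hcard1 := (hf σ hσ).1
      have hmem1 : κ ∈ K.filter (fun τ' => Facet σ τ' ∧ f τ' ≤ f σ) := by
        simp [hκ, hftκ, hle]
      have hmem2 : τ ∈ K.filter (fun τ' => Facet σ τ' ∧ f τ' ≤ f σ) := by
        simp [hτ, hft, hge]
      have : κ = τ := Finset.card_le_one.mp hcard1 _ hmem1 _ hmem2
      exact this ▸ le_refl _

end Aux

/-- On a gradient pair `σ ≺ τ` with `f σ ≥ f τ`, `h_f σ = h_f τ`. -/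
theorem normalization_eq_on_gradPair {V : Type*} [DecidableEq V]
    (K : Finset (Finset V)) (hK : IsComplex K) (hconn : ComplexConnected K)
    (f : Finset V → ℝ) (hf : IsMorse K f)
    (σ τ : Finset V) (hσ : σ ∈ K) (hτ : τ ∈ K) (hft : Facet σ τ) (hge : f τ ≤ f σ) :
    normalization K f σ = normalization K f τ := by
  have hE := hfun_equiv K f
  have hM : IsMorse K (hfun K f) := morse_of_equiv hf hE
  have key : ∀ ρ ∈ K, normalization K f ρ = hfun K f ρ := by
    intro ρ hρ
    unfold normalization
    apply le_antisymm
    · exact Nat.sInf_le ⟨hfun K f, hM, hE, rfl⟩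
    · refine le_csInf ⟨hfun K f ρ, hfun K f, hM, hE, rfl⟩ ?_
      rintro n ⟨g, hg, hge', rfl⟩
      exact hfun_min hge' hρ
  rw [key σ hσ, key τ hτ]
  exact hfun_pair_aux hK hf (meas K f τ + 1) σ τ hσ hτ hft hge (Nat.lt_succ_self _)
end

section
/- A finite connected graph G is collapsible (equivalently, is a tree) if and only if there exists a discrete Morse function f : G → ℝ with N(G, f) = Σ_{σ critical}(−1)^{dim σ} h_f(σ) = 0. -/
open Finset

variable {V : Type*}

section Aux
variable {V : Type*} [DecidableEq V]

lemma facet_ssubset {σ τ : Finset V} (h : Facet σ τ) : σ ⊂ τ := by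
  refine Finset.ssubset_iff_subset_ne.mpr ⟨h.1, ?_⟩
  intro he; subst he; exact absurd h.2 (by omega)

lemma facet_ne {σ τ : Finset V} (h : Facet σ τ) : σ ≠ τ := (facet_ssubset h).ne

/-- rank function -/
noncomputable def rk (K : Finset (Finset V)) (f : Finset V → ℝ) (ρ : Finset V) : ℕ :=
  ((K.image f).filter (fun y => y < f ρ)).card

lemma rk_mono {K : Finset (Finset V)} {f : Finset V → ℝ} {ρ₁ ρ₂ : Finset V}
    (h : f ρ₁ ≤ f ρ₂) : rk K f ρ₁ ≤ rk K f ρ₂ := by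
  apply Finset.card_le_card
  intro y hy
  simp only [Finset.mem_filter] at hy ⊢
  exact ⟨hy.1, lt_of_lt_of_le hy.2 h⟩

lemma rk_strict {K : Finset (Finset V)} {f : Finset V → ℝ} {ρ₁ ρ₂ : Finset V}
    (h₁ : ρ₁ ∈ K) (h : f ρ₁ < f ρ₂) : rk K f ρ₁ < rk K f ρ₂ := by
  apply Finset.card_lt_card
  constructor
  · intro y hy
    simp only [Finset.mem_filter] at hy ⊢
    exact ⟨hy.1, lt_trans hy.2 h⟩
  · intro hsub
    have : f ρ₁ ∈ (K.image f).filter (fun y => y < f ρ₂) :=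
      Finset.mem_filter.mpr ⟨Finset.mem_image_of_mem f h₁, h⟩
    have := hsub this
    simp only [Finset.mem_filter] at this
    exact lt_irrefl _ this.2

lemma rk_lt_iff {K : Finset (Finset V)} {f : Finset V → ℝ} {ρ₁ ρ₂ : Finset V}
    (h₁ : ρ₁ ∈ K) (h₂ : ρ₂ ∈ K) : f ρ₁ < f ρ₂ ↔ rk K f ρ₁ < rk K f ρ₂ := by
  constructor
  · exact rk_strict h₁
  · intro h
    by_contra hc
    exact absurd (rk_mono (le_of_not_gt hc)) (not_le_of_gt h)

lemma rk_le_iff {K : Finset (Finset V)} {f : Finset V → ℝ} {ρ₁ ρ₂ : Finset V}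
    (h₁ : ρ₁ ∈ K) (h₂ : ρ₂ ∈ K) : f ρ₁ ≤ f ρ₂ ↔ rk K f ρ₁ ≤ rk K f ρ₂ := by
  rw [← not_lt, ← not_lt, not_iff_not]
  exact rk_lt_iff h₂ h₁

lemma isMorse_rk {K : Finset (Finset V)} {f : Finset V → ℝ}
    (hf : IsMorse K f) : IsMorse K (rk K f) := by
  intro σ hσ
  obtain ⟨h1, h2⟩ := hf σ hσ
  constructor
  · refine le_trans (Finset.card_le_card ?_) h1
    intro t ht
    simp only [Finset.mem_filter] at ht ⊢
    exact ⟨ht.1, ht.2.1, (rk_le_iff ht.1 hσ).mpr ht.2.2⟩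
  · refine le_trans (Finset.card_le_card ?_) h2
    intro t ht
    simp only [Finset.mem_filter] at ht ⊢
    exact ⟨ht.1, ht.2.1, (rk_le_iff hσ ht.1).mpr ht.2.2⟩

lemma morseEquiv_rk {K : Finset (Finset V)} {f : Finset V → ℝ} :
    MorseEquiv K f (rk K f) := fun σ hσ τ hτ _ => rk_lt_iff hσ hτ

lemma normalization_critical_vertex {K : Finset (Finset V)} {f : Finset V → ℝ}
    (hK : IsComplex K) (hf : IsMorse K f) {σ₀ : Finset V}
    (hcrit : IsCritical K f σ₀) (hcard : σ₀.card = 1) :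
    normalization K f σ₀ = 0 := by
  obtain ⟨hσ₀K, hup, hdown⟩ := hcrit
  have hnofacet : ∀ ν ∈ K, ¬ Facet ν σ₀ := by
    intro ν hν hfac
    have h1 := (hK.1 ν hν).card_pos
    have h2 := hfac.2
    omega
  have hge1 : ∀ τ ∈ K, Facet σ₀ τ → 1 ≤ rk K f τ := by
    intro τ hτ hfac
    have := rk_strict (K := K) hσ₀K (hup τ hτ hfac)
    omega
  set g : Finset V → ℕ := fun ρ => if ρ = σ₀ then 0 else rk K f ρ with hg
  have hGmorse : IsMorse K g := by
    intro ρ hρ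
    by_cases hρσ : ρ = σ₀
    · subst hρσ
      constructor
      · have : K.filter (fun τ => Facet ρ τ ∧ g τ ≤ g ρ) = ∅ := by
          apply Finset.filter_eq_empty_iff.mpr
          intro τ hτ ⟨hfac, hle⟩
          have hne : τ ≠ ρ := (facet_ne hfac).symm
          have e1 : g τ = rk K f τ := if_neg hne
          have h1 := hge1 τ hτ hfac
          have e2 : g ρ = 0 := if_pos rfl
          omega
        rw [this]; simp
      · have : K.filter (fun ν => Facet ν ρ ∧ g ρ ≤ g ν) = ∅ := by
          apply Finset.filter_eq_empty_iff.mpr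
          intro ν hν ⟨hfac, _⟩
          exact hnofacet ν hν hfac
        rw [this]; simp
    · obtain ⟨h1, h2⟩ := hf ρ hρ
      constructor
      · refine le_trans (Finset.card_le_card ?_) h1
        intro t ht
        simp only [Finset.mem_filter] at ht ⊢
        obtain ⟨htK, hfac, hle⟩ := ht
        have htne : t ≠ σ₀ := by
          intro he; subst he; exact hnofacet ρ hρ hfac
        rw [hg] at hle
        simp only [if_neg htne, if_neg hρσ] at hle
        exact ⟨htK, hfac, (rk_le_iff htK hρ).mpr hle⟩
      · refine le_trans (Finset.card_le_card ?_) h2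
        intro t ht
        simp only [Finset.mem_filter] at ht ⊢
        obtain ⟨htK, hfac, hle⟩ := ht
        have htne : t ≠ σ₀ := by
          intro he; subst he
          simp only [hg, if_neg hρσ] at hle
          simp at hle
          have := hge1 ρ hρ hfac
          omega
        rw [hg] at hle
        simp only [if_neg htne, if_neg hρσ] at hle
        exact ⟨htK, hfac, (rk_le_iff hρ htK).mpr hle⟩
  have hequiv : MorseEquiv K f g := by
    intro s hs t ht hfac
    by_cases hsσ : s = σ₀
    · subst hsσ
      have htne : t ≠ s := (facet_ne hfac).symm
      constructor
      · intro _
        rw [hg]; simp only [if_neg htne, if_pos rfl]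
        exact hge1 t ht hfac
      · intro _
        exact hup t ht hfac
    · have htσ : t ≠ σ₀ := by
        intro he; subst he; exact hnofacet s hs hfac
      rw [hg]; simp only [if_neg htσ, if_neg hsσ]
      exact rk_lt_iff hs ht
  apply Nat.sInf_eq_zero.mpr
  left
  exact ⟨g, hGmorse, hequiv, if_pos rfl⟩

lemma normalization_critical_edge {K : Finset (Finset V)} {f : Finset V → ℝ}
    (hK : IsComplex K) (hf : IsMorse K f) {e : Finset V}
    (hcrit : IsCritical K f e) (hcard : e.card = 2) :
    1 ≤ normalization K f e := by
  obtain ⟨heK, _, hdown⟩ := hcrit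
  obtain ⟨w, hw⟩ := Finset.card_pos.mp (by omega : 0 < e.card)
  have hwK : ({w} : Finset V) ∈ K :=
    hK.2 e heK {w} (Finset.singleton_subset_iff.mpr hw) (Finset.singleton_nonempty w)
  have hfac : Facet ({w} : Finset V) e := ⟨Finset.singleton_subset_iff.mpr hw, by simp [hcard]⟩
  have hne : ({n : ℕ | ∃ g : Finset V → ℕ, IsMorse K g ∧ MorseEquiv K f g ∧ g e = n}).Nonempty :=
    ⟨rk K f e, rk K f, isMorse_rk hf, morseEquiv_rk, rfl⟩
  have h0 : normalization K f e ≠ 0 := by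
    intro h
    rcases Nat.sInf_eq_zero.mp h with h0 | hemp
    · obtain ⟨g, hgM, hgE, hge⟩ := h0
      have := (hgE {w} hwK e heK hfac).mp (hdown {w} hwK hfac)
      omega
    · exact hne.ne_empty hemp
  exact Nat.one_le_iff_ne_zero.mpr h0

lemma no_crit_edge_of_H {K : Finset (Finset V)} {f : Finset V → ℝ}
    (hK : IsComplex K)
    (hH : ∀ e ∈ K, e.card = 2 → ∃ w ∈ e, f e ≤ f {w}) :
    ∀ e ∈ K, e.card = 2 → ¬ IsCritical K f e := by
  intro e heK hcard hcrit
  obtain ⟨w, hw, hle⟩ := hH e heK hcard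
  have hwK : ({w} : Finset V) ∈ K :=
    hK.2 e heK {w} (Finset.singleton_subset_iff.mpr hw) (Finset.singleton_nonempty w)
  have hfac : Facet ({w} : Finset V) e := ⟨Finset.singleton_subset_iff.mpr hw, by simp [hcard]⟩
  exact absurd hle (not_le_of_gt (hcrit.2.2 {w} hwK hfac))

lemma critSum_zero_of_H {K : Finset (Finset V)} {f : Finset V → ℝ}
    (hK : IsComplex K) (hdim : ∀ σ ∈ K, σ.card ≤ 2) (hf : IsMorse K f)
    (hH : ∀ e ∈ K, e.card = 2 → ∃ w ∈ e, f e ≤ f {w}) :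
    critSum K f = 0 := by
  unfold critSum
  apply Finset.sum_eq_zero
  intro σ hσ
  rw [Finset.mem_filter] at hσ
  obtain ⟨hσK, hcrit⟩ := hσ
  have h1 : 1 ≤ σ.card := (hK.1 σ hσK).card_pos
  have h2 : σ.card ≤ 2 := hdim σ hσK
  interval_cases h : σ.card
  · rw [normalization_critical_vertex hK hf hcrit h]
    simp
  · exact absurd hcrit (no_crit_edge_of_H hK hH σ hσK h)

lemma H_of_critSum_zero {K : Finset (Finset V)} {f : Finset V → ℝ}
    (hK : IsComplex K) (hdim : ∀ σ ∈ K, σ.card ≤ 2) (hf : IsMorse K f)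
    (h0 : critSum K f = 0) :
    ∀ e ∈ K, e.card = 2 → ∃ w ∈ e, f e ≤ f {w} := by
  have hterm : ∀ σ ∈ K.filter (fun σ => IsCritical K f σ),
      (-1 : ℤ) ^ (dimS σ) * (normalization K f σ : ℤ) ≤ 0 := by
    intro σ hσ
    rw [Finset.mem_filter] at hσ
    obtain ⟨hσK, hcrit⟩ := hσ
    have h1 : 1 ≤ σ.card := (hK.1 σ hσK).card_pos
    have h2 : σ.card ≤ 2 := hdim σ hσK
    interval_cases h : σ.card
    · rw [normalization_critical_vertex hK hf hcrit h]; simp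
    · have : dimS σ = 1 := by simp [dimS, h]
      rw [this]
      have := normalization_critical_edge hK hf hcrit h
      have hn : (0 : ℤ) ≤ (normalization K f σ : ℤ) := Int.natCast_nonneg _
      nlinarith
  have hall := (Finset.sum_eq_zero_iff_of_nonpos hterm).mp h0
  have hnocrit : ∀ e ∈ K, e.card = 2 → ¬ IsCritical K f e := by
    intro e heK hcard hcrit
    have hmem : e ∈ K.filter (fun σ => IsCritical K f σ) :=
      Finset.mem_filter.mpr ⟨heK, hcrit⟩
    have := hall e hmem
    have hd : dimS e = 1 := by simp [dimS, hcard]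
    rw [hd] at this
    have hge := normalization_critical_edge hK hf hcrit hcard
    have hn : (1 : ℤ) ≤ (normalization K f e : ℤ) := by exact_mod_cast hge
    nlinarith
  intro e heK hcard
  have hnc := hnocrit e heK hcard
  unfold IsCritical at hnc
  push_neg at hnc
  have hA : ∀ τ ∈ K, Facet e τ → f e < f τ := by
    intro τ hτK hfac
    exfalso
    have := hdim τ hτK
    have := hfac.2
    omega
  obtain ⟨ν, hνK, hfac, hle⟩ := hnc heK hA
  have hν1 : ν.card = 1 := by have := hfac.2; omega
  obtain ⟨w, hw⟩ := Finset.card_eq_one.mp hν1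
  subst hw
  exact ⟨w, Finset.singleton_subset_iff.mp hfac.1, hle⟩

lemma collapsible_of_H : ∀ (n : ℕ) (K : Finset (Finset V)), K.card ≤ n →
    IsComplex K → (∀ σ ∈ K, σ.card ≤ 2) → ComplexConnected K →
    (∃ f : Finset V → ℝ, IsMorse K f ∧ ∀ e ∈ K, e.card = 2 → ∃ w ∈ e, f e ≤ f {w}) →
    Collapsible K := by
  intro n
  induction n with
  | zero =>
    intro K hcard _ _ hconn _
    obtain ⟨σ, hσ⟩ := hconn.1
    have := Finset.card_pos.mpr ⟨σ, hσ⟩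
    omega
  | succ n ih =>
    intro K hcard hK hdim hconn hex
    obtain ⟨f, hf, hH⟩ := hex
    by_cases hE : ∃ e ∈ K, e.card = 2
    · -- there is an edge; find a free vertex
      obtain ⟨e₀, he₀K, he₀c⟩ := hE
      set S : Finset V := (K.filter (fun e => e.card = 2)).biUnion
        (fun e => e.filter (fun v => f e ≤ f {v})) with hS
      have hSne : S.Nonempty := by
        obtain ⟨w, hw, hle⟩ := hH e₀ he₀K he₀c
        exact ⟨w, Finset.mem_biUnion.mpr ⟨e₀, Finset.mem_filter.mpr ⟨he₀K, he₀c⟩,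
          Finset.mem_filter.mpr ⟨hw, hle⟩⟩⟩
      obtain ⟨v, hvS, hvmax⟩ := Finset.exists_max_image S (fun v => f {v}) hSne
      rw [hS, Finset.mem_biUnion] at hvS
      obtain ⟨e, heE, hve⟩ := hvS
      rw [Finset.mem_filter] at heE hve
      obtain ⟨heK, hec⟩ := heE
      obtain ⟨hvine, hvle⟩ := hve
      have hvK : ({v} : Finset V) ∈ K :=
        hK.2 e heK {v} (Finset.singleton_subset_iff.mpr hvine) (Finset.singleton_nonempty v)
      have hfacve : Facet ({v} : Finset V) e :=
        ⟨Finset.singleton_subset_iff.mpr hvine, by simp [hec]⟩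
      -- v is a free face: every ρ strictly containing {v} equals e
      have hfree : ∀ ρ ∈ K, ({v} : Finset V) ⊂ ρ → ρ = e := by
        intro ρ hρK hssub
        by_contra hne
        have hρc : ρ.card = 2 := by
          have h1 := Finset.card_lt_card hssub
          have h2 := hdim ρ hρK
          simp at h1
          omega
        have hfacvρ : Facet ({v} : Finset V) ρ := ⟨hssub.1, by simp [hρc]⟩
        have hflt : f {v} < f ρ := by
          by_contra hc
          push_neg at hc
          have h1 := (hf {v} hvK).1
          have hmem1 : e ∈ K.filter (fun τ => Facet ({v} : Finset V) τ ∧ f τ ≤ f {v}) :=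
            Finset.mem_filter.mpr ⟨heK, hfacve, hvle⟩
          have hmem2 : ρ ∈ K.filter (fun τ => Facet ({v} : Finset V) τ ∧ f τ ≤ f {v}) :=
            Finset.mem_filter.mpr ⟨hρK, hfacvρ, hc⟩
          have : 1 < (K.filter (fun τ => Facet ({v} : Finset V) τ ∧ f τ ≤ f {v})).card :=
            Finset.one_lt_card.mpr ⟨ρ, hmem2, e, hmem1, hne⟩
          omega
        obtain ⟨w, hwρ, hwle⟩ := hH ρ hρK hρc
        have hwS : w ∈ S := Finset.mem_biUnion.mpr ⟨ρ, Finset.mem_filter.mpr ⟨hρK, hρc⟩,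
          Finset.mem_filter.mpr ⟨hwρ, hwle⟩⟩
        have := hvmax w hwS
        linarith
      -- the other endpoint
      have hvsube : ({v} : Finset V) ⊆ e := Finset.singleton_subset_iff.mpr hvine
      have hu1 : (e.erase v).card = 1 := by
        rw [Finset.card_erase_of_mem hvine, hec]
      obtain ⟨u, hu⟩ := Finset.card_eq_one.mp hu1
      have huv : u ≠ v := by
        have : u ∈ e.erase v := by rw [hu]; exact Finset.mem_singleton_self u
        exact (Finset.mem_erase.mp this).1
      have huine : u ∈ e := by
        have : u ∈ e.erase v := by rw [hu]; exact Finset.mem_singleton_self u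
        exact Finset.mem_of_mem_erase this
      have huK : ({u} : Finset V) ∈ K :=
        hK.2 e heK {u} (Finset.singleton_subset_iff.mpr huine) (Finset.singleton_nonempty u)
      set K' : Finset (Finset V) := (K.erase {v}).erase e with hK'
      have hK'sub : K' ⊆ K := (Finset.erase_subset _ _).trans (Finset.erase_subset _ _)
      have hsne : ({v} : Finset V) ≠ e := by
        intro h; rw [← h] at hec; simp at hec
      have hvnotin : ∀ ρ ∈ K', v ∉ ρ := by
        intro ρ hρ hvρ
        rw [hK', Finset.mem_erase, Finset.mem_erase] at hρ
        obtain ⟨hρe, hρv, hρK⟩ := hρ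
        have : ({v} : Finset V) ⊂ ρ := Finset.ssubset_iff_subset_ne.mpr
          ⟨Finset.singleton_subset_iff.mpr hvρ, fun h => hρv h.symm⟩
        exact hρe (hfree ρ hρK this)
      have hmemK' : ∀ ρ, ρ ∈ K' ↔ ρ ∈ K ∧ ρ ≠ {v} ∧ ρ ≠ e := by
        intro ρ
        rw [hK', Finset.mem_erase, Finset.mem_erase]
        tauto
      have hK'complex : IsComplex K' := by
        constructor
        · intro σ hσ; exact hK.1 σ (hK'sub hσ)
        · intro σ hσ μ hμσ hμne
          have hσK := hK'sub hσ
          have hμK := hK.2 σ hσK μ hμσ hμne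
          rw [hmemK']
          refine ⟨hμK, ?_, ?_⟩
          · intro h
            exact hvnotin σ hσ (hμσ (h ▸ Finset.mem_singleton_self v))
          · intro h
            exact hvnotin σ hσ (hμσ (h ▸ hvine))
      have huK' : ({u} : Finset V) ∈ K' := by
        rw [hmemK']
        refine ⟨huK, ?_, ?_⟩
        · intro h
          exact huv (Finset.singleton_inj.mp h)
        · intro h
          rw [← h] at hec; simp at hec
      -- connectivity of K'
      set m : V → V := fun a => if a = v then u else a with hm
      have hmv : m v = u := if_pos rfl
      have hmne : ∀ a, a ≠ v → m a = a := fun a ha => if_neg ha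
      have hpairself : ∀ x : V, ({x, x} : Finset V) = {x} := fun x => by simp
      have hstep : ∀ a b : V, ({a, b} : Finset V) ∈ K → ({m a, m b} : Finset V) ∈ K' := by
        intro a b hab
        by_cases ha : a = v <;> by_cases hb : b = v
        · rw [ha, hb, hmv, hpairself]
          exact huK'
        · rw [ha] at hab
          have hbpair : b ∈ ({v, b} : Finset V) := by simp
          have hss : ({v} : Finset V) ⊂ {v, b} := by
            refine Finset.ssubset_iff_subset_ne.mpr ⟨by simp, ?_⟩
            intro h
            rw [← h] at hbpair
            exact hb (Finset.mem_singleton.mp hbpair)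
          have heq := hfree _ hab hss
          have hbe : b ∈ e.erase v := Finset.mem_erase.mpr ⟨hb, heq ▸ hbpair⟩
          rw [hu, Finset.mem_singleton] at hbe
          rw [ha, hmv, hmne b hb, hbe, hpairself]
          exact huK'
        · rw [hb] at hab
          have hapair : a ∈ ({a, v} : Finset V) := by simp
          have hss : ({v} : Finset V) ⊂ {a, v} := by
            refine Finset.ssubset_iff_subset_ne.mpr ⟨by simp, ?_⟩
            intro h
            rw [← h] at hapair
            exact ha (Finset.mem_singleton.mp hapair)
          have heq := hfree _ hab hss
          have hae : a ∈ e.erase v := Finset.mem_erase.mpr ⟨ha, heq ▸ hapair⟩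
          rw [hu, Finset.mem_singleton] at hae
          rw [hb, hmv, hmne a ha, hae, hpairself]
          exact huK'
        · rw [hmne a ha, hmne b hb, hmemK']
          refine ⟨hab, ?_, ?_⟩
          · intro h
            have : a ∈ ({v} : Finset V) := h ▸ (by simp : a ∈ ({a, b} : Finset V))
            exact ha (Finset.mem_singleton.mp this)
          · intro h
            have : v ∈ ({a, b} : Finset V) := h ▸ hvine
            rcases Finset.mem_insert.mp this with h1 | h1
            · exact ha h1.symm
            · exact hb (Finset.mem_singleton.mp h1).symm
      have hK'conn : ComplexConnected K' := by
        refine ⟨⟨{u}, huK'⟩, ?_⟩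
        intro x y hx hy
        have hxv : x ≠ v := fun h => hvnotin {x} hx (Finset.mem_singleton.mpr h.symm)
        have hyv : y ≠ v := fun h => hvnotin {y} hy (Finset.mem_singleton.mpr h.symm)
        have hpath := hconn.2 x y (hK'sub hx) (hK'sub hy)
        have hlift : Relation.ReflTransGen (fun a b => ({a, b} : Finset V) ∈ K') (m x) (m y) :=
          Relation.ReflTransGen.lift
          (r := fun a b => ({a, b} : Finset V) ∈ K)
          (p := fun a b => ({a, b} : Finset V) ∈ K') m hstep _ _ hpath
        rw [hmne x hxv, hmne y hyv] at hlift
        exact hlift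
      -- Morse data for K'
      have hK'morse : IsMorse K' f := by
        intro σ hσ
        obtain ⟨h1, h2⟩ := hf σ (hK'sub hσ)
        exact ⟨le_trans (Finset.card_le_card (Finset.filter_subset_filter _ hK'sub)) h1,
          le_trans (Finset.card_le_card (Finset.filter_subset_filter _ hK'sub)) h2⟩
      have hK'H : ∀ e' ∈ K', e'.card = 2 → ∃ w ∈ e', f e' ≤ f {w} :=
        fun e' he' hc => hH e' (hK'sub he') hc
      -- cardinality
      have heK' : e ∈ K.erase {v} := Finset.mem_erase.mpr ⟨fun h => hsne h.symm, heK⟩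
      have hcard' : K'.card ≤ n := by
        rw [hK', Finset.card_erase_of_mem heK', Finset.card_erase_of_mem hvK]
        omega
      obtain ⟨v₀, hpath₀⟩ := ih K' hcard' hK'complex
        (fun σ hσ => hdim σ (hK'sub hσ)) hK'conn ⟨f, hK'morse, hK'H⟩
      exact ⟨v₀, Relation.ReflTransGen.head
        ⟨{v}, e, hvK, heK, hfacve, hfree, rfl⟩ hpath₀⟩
    · -- no edges: K is a single vertex
      push_neg at hE
      have hall1 : ∀ σ ∈ K, σ.card = 1 := by
        intro σ hσ
        have h1 := (hK.1 σ hσ).card_pos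
        have h2 := hdim σ hσ
        have h3 := hE σ hσ
        omega
      obtain ⟨σ₁, hσ₁⟩ := hconn.1
      obtain ⟨v₁, hv₁⟩ := Finset.card_eq_one.mp (hall1 σ₁ hσ₁)
      subst hv₁
      have hKeq : K = {({v₁} : Finset V)} := by
        rw [Finset.eq_singleton_iff_unique_mem]
        refine ⟨hσ₁, ?_⟩
        intro ρ hρ
        obtain ⟨x, hx⟩ := Finset.card_eq_one.mp (hall1 ρ hρ)
        subst hx
        have hpath := hconn.2 x v₁ hρ hσ₁
        have heq : x = v₁ := by
          clear hρ hσ₁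
          induction hpath with
          | refl => rfl
          | @tail b c hab hbc ihh =>
            have hbc' : b = c := by
              by_contra h
              have := hall1 _ hbc
              rw [Finset.card_pair h] at this
              omega
            exact ihh.trans hbc'
        rw [heq]
      exact ⟨v₁, hKeq ▸ Relation.ReflTransGen.refl⟩

lemma nonempty_of_collapse {K : Finset (Finset V)} {v : V}
    (h : Relation.ReflTransGen CollapseStep K {{v}}) : K.Nonempty := by
  rcases Relation.ReflTransGen.cases_head h with heq | ⟨K'', hstep, _⟩
  · rw [heq]; exact ⟨{v}, Finset.mem_singleton_self _⟩
  · obtain ⟨σ, τ, hσ, _⟩ := hstep; exact ⟨σ, hσ⟩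

lemma exists_morse_H_of_collapsible {K : Finset (Finset V)} {v : V}
    (hpath : Relation.ReflTransGen CollapseStep K {{v}}) :
    IsComplex K → (∀ σ ∈ K, σ.card ≤ 2) →
    ∃ f : Finset V → ℝ, IsMorse K f ∧ ∀ e ∈ K, e.card = 2 → ∃ w ∈ e, f e ≤ f {w} := by
  induction hpath using Relation.ReflTransGen.head_induction_on with
  | refl =>
    intro _ _
    refine ⟨fun _ => 0, ?_, ?_⟩
    · intro σ hσ
      constructor <;>
        exact le_trans (Finset.card_le_card (Finset.filter_subset _ _)) (by simp)
    · intro e he hc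
      rw [Finset.mem_singleton] at he
      rw [he] at hc
      simp at hc
  | head hstep hrest ihh =>
    rename_i A B
    intro hK hdim
    obtain ⟨σ, τ, hσK, hτK, hfac, hfree, hBeq⟩ := hstep
    have hστ : σ ≠ τ := facet_ne hfac
    have hσc : σ.card = 1 := by
      have h1 := (hK.1 σ hσK).card_pos
      have h2 := hdim τ hτK
      have h3 := hfac.2
      omega
    have hτc : τ.card = 2 := by have := hfac.2; omega
    have hBsub : B ⊆ A := by
      rw [hBeq]
      exact (Finset.erase_subset _ _).trans (Finset.erase_subset _ _)
    have hmemB : ∀ ρ, ρ ∈ B ↔ ρ ∈ A ∧ ρ ≠ σ ∧ ρ ≠ τ := by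
      intro ρ
      rw [hBeq, Finset.mem_erase, Finset.mem_erase]
      tauto
    have hBcomplex : IsComplex B := by
      constructor
      · intro ρ hρ; exact hK.1 ρ (hBsub hρ)
      · intro ρ hρ μ hμρ hμne
        have hρA := hBsub hρ
        have hμA := hK.2 ρ hρA μ hμρ hμne
        rw [hmemB] at hρ ⊢
        refine ⟨hμA, ?_, ?_⟩
        · intro h
          subst h
          have hss : μ ⊂ ρ := Finset.ssubset_iff_subset_ne.mpr ⟨hμρ, Ne.symm hρ.2.1⟩
          exact hρ.2.2 (hfree ρ hρA hss)
        · intro h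
          subst h
          have : μ = ρ := Finset.eq_of_subset_of_card_le hμρ (by
            have := hdim ρ hρA; omega)
          exact hρ.2.2 this.symm
    have hBdim : ∀ ρ ∈ B, ρ.card ≤ 2 := fun ρ hρ => hdim ρ (hBsub hρ)
    obtain ⟨f', hf', hH'⟩ := ihh hBcomplex hBdim
    have hBne : B.Nonempty := nonempty_of_collapse hrest
    set M : ℝ := B.sup' hBne f' with hM
    set f : Finset V → ℝ := fun ρ => if ρ = σ ∨ ρ = τ then M + 1 else f' ρ with hf
    have hfB : ∀ ρ ∈ B, f ρ = f' ρ := by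
      intro ρ hρ
      rw [hmemB] at hρ
      exact if_neg (by tauto)
    have hfBle : ∀ ρ ∈ B, f ρ ≤ M := by
      intro ρ hρ
      rw [hfB ρ hρ]
      exact Finset.le_sup' f' hρ
    have hfσ : f σ = M + 1 := if_pos (Or.inl rfl)
    have hfτ : f τ = M + 1 := if_pos (Or.inr rfl)
    have hmemA : ∀ ρ, ρ ∈ A ↔ ρ ∈ B ∨ ρ = σ ∨ ρ = τ := by
      intro ρ
      rw [hmemB]
      constructor
      · intro h
        by_cases h1 : ρ = σ
        · exact Or.inr (Or.inl h1)
        by_cases h2 : ρ = τ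
        · exact Or.inr (Or.inr h2)
        · exact Or.inl ⟨h, h1, h2⟩
      · rintro (h | h | h)
        · exact h.1
        · rw [h]; exact hσK
        · rw [h]; exact hτK
    refine ⟨f, ?_, ?_⟩
    · -- IsMorse A f
      intro ρ hρ
      rcases (hmemA ρ).mp hρ with hρB | hρσ | hρτ
      · obtain ⟨h1, h2⟩ := hf' ρ hρB
        constructor
        · refine le_trans (Finset.card_le_card ?_) h1
          intro t ht
          simp only [Finset.mem_filter] at ht ⊢
          obtain ⟨htA, htfac, htle⟩ := ht
          have htσ : t ≠ σ := by
            intro h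
            subst h
            have h1 := (hK.1 ρ hρ).card_pos
            have h2 := htfac.2
            omega
          have htτ : t ≠ τ := by
            intro h
            subst h
            rw [hfτ, hfB ρ hρB] at htle
            have := hfBle ρ hρB
            rw [hfB ρ hρB] at this
            linarith
          have htB : t ∈ B := (hmemB t).mpr ⟨htA, htσ, htτ⟩
          refine ⟨htB, htfac, ?_⟩
          rw [← hfB t htB, ← hfB ρ hρB]
          exact htle
        · refine le_trans (Finset.card_le_card ?_) h2
          intro t ht
          simp only [Finset.mem_filter] at ht ⊢
          obtain ⟨htA, htfac, htle⟩ := ht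
          have htτ : t ≠ τ := by
            intro h
            subst h
            have h1 := hdim ρ hρ
            have h2 := htfac.2
            omega
          have htσ : t ≠ σ := by
            intro h
            subst h
            have := hfree ρ hρ (facet_ssubset htfac)
            rw [hmemB] at hρB
            exact hρB.2.2 this
          have htB : t ∈ B := (hmemB t).mpr ⟨htA, htσ, htτ⟩
          refine ⟨htB, htfac, ?_⟩
          rw [← hfB t htB, ← hfB ρ hρB]
          exact htle
      · subst hρσ
        constructor
        · refine le_trans (Finset.card_le_card (?_ : _ ⊆ ({τ} : Finset (Finset V)))) (by simp)
          intro t ht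
          simp only [Finset.mem_filter] at ht
          rw [Finset.mem_singleton]
          exact hfree t ht.1 (facet_ssubset ht.2.1)
        · have : A.filter (fun ν => Facet ν ρ ∧ f ρ ≤ f ν) = ∅ := by
            apply Finset.filter_eq_empty_iff.mpr
            intro ν hν ⟨hfacν, _⟩
            have h1 := (hK.1 ν hν).card_pos
            have h2 := hfacν.2
            omega
          rw [this]; simp
      · subst hρτ
        constructor
        · have : A.filter (fun t => Facet ρ t ∧ f t ≤ f ρ) = ∅ := by
            apply Finset.filter_eq_empty_iff.mpr
            intro t ht ⟨hfact, _⟩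
            have h1 := hdim t ht
            have h2 := hfact.2
            omega
          rw [this]; simp
        · refine le_trans (Finset.card_le_card (?_ : _ ⊆ ({σ} : Finset (Finset V)))) (by simp)
          intro t ht
          simp only [Finset.mem_filter] at ht
          obtain ⟨htA, htfac, htle⟩ := ht
          rw [Finset.mem_singleton]
          rcases (hmemA t).mp htA with htB | h | h
          · exfalso
            have := hfBle t htB
            rw [hfτ] at htle
            linarith
          · exact h
          · exfalso
            exact facet_ne htfac h
    · -- H property
      intro e he hc
      rcases (hmemA e).mp he with heB | heσ | heτ
      · obtain ⟨w, hw, hle⟩ := hH' e heB hc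
        refine ⟨w, hw, ?_⟩
        have hwA : ({w} : Finset V) ∈ A :=
          hK.2 e he {w} (Finset.singleton_subset_iff.mpr hw) (Finset.singleton_nonempty w)
        have hwσ : ({w} : Finset V) ≠ σ := by
          intro h
          have hss : σ ⊂ e := by
            refine Finset.ssubset_iff_subset_ne.mpr ⟨?_, ?_⟩
            · rw [← h]; exact Finset.singleton_subset_iff.mpr hw
            · intro hh
              rw [hmemB] at heB
              exact heB.2.1 hh.symm
          rw [hmemB] at heB
          exact heB.2.2 (hfree e he hss)
        have hwτ : ({w} : Finset V) ≠ τ := by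
          intro h
          have := congrArg Finset.card h
          simp [hτc] at this
        have hwB : ({w} : Finset V) ∈ B := (hmemB _).mpr ⟨hwA, hwσ, hwτ⟩
        rw [hfB e heB, hfB _ hwB]
        exact hle
      · subst heσ
        rw [hσc] at hc
        omega
      · subst heτ
        obtain ⟨s, hs⟩ := Finset.card_eq_one.mp hσc
        refine ⟨s, ?_, ?_⟩
        · apply hfac.1
          rw [hs]
          exact Finset.mem_singleton_self s
        · rw [hfτ, ← hs, hfσ]

end Aux

/-- A finite connected graph `G` is collapsible (i.e. a tree) iff some
discrete Morse function `f` on `G` has `𝔑(G,f) = 0`. -/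
theorem graph_collapsible_iff_critSum_zero {V : Type*} [DecidableEq V]
    (G : Finset (Finset V)) (hG : IsComplex G) (hdim : ∀ σ ∈ G, σ.card ≤ 2)
    (hconn : ComplexConnected G) :
    Collapsible G ↔ ∃ f : Finset V → ℝ, IsMorse G f ∧ critSum G f = 0 := by
  constructor
  · rintro ⟨v, hpath⟩
    obtain ⟨f, hf, hH⟩ := exists_morse_H_of_collapsible hpath hG hdim
    exact ⟨f, hf, critSum_zero_of_H hG hdim hf hH⟩
  · rintro ⟨f, hf, h0⟩
    exact collapsible_of_H G.card G le_rfl hG hdim hconn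
      ⟨f, hf, H_of_critSum_zero hG hdim hf h0⟩
end

section
/- Let L be a finite connected 2-dimensional simplicial complex with H₂(L; ℝ) = 0, let f be a discrete Morse function on L, and form the bipartite graph G on the critical 1-simplices A and critical 2-simplices B of f, joining e ∈ A to σ ∈ B whenever there is a gradient path from an immediate face of σ to e. Then G admits a matching saturating B. -/
open Finset

variable {V : Type*}

set_option linter.unusedSectionVars false
set_option maxHeartbeats 1000000

section Helpers

variable {V : Type*} [DecidableEq V] [LinearOrder V]

lemma bsign_of_not_facet {ν τ : Finset V} (h : ¬ Facet ν τ) : bsign ν τ = 0 := by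
  simp [bsign, h]

lemma facet_sdiff {ν τ : Finset V} (h : Facet ν τ) :
    ∃ v, v ∈ τ ∧ v ∉ ν ∧ τ \ ν = {v} := by
  have hcard : (τ \ ν).card = 1 := by
    have := h.2
    rw [Finset.card_sdiff_of_subset h.1]; omega
  obtain ⟨v, hv⟩ := Finset.card_eq_one.mp hcard
  refine ⟨v, ?_, ?_, hv⟩ <;>
    · have : v ∈ τ \ ν := hv ▸ Finset.mem_singleton_self v
      simp only [Finset.mem_sdiff] at this
      tauto

lemma bsign_facet {ν τ : Finset V} (h : Facet ν τ) {v : V} (hv : τ \ ν = {v}) :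
    bsign ν τ = (-1 : ℝ) ^ ((τ.filter (fun u => u < v)).card) := by
  simp [bsign, h, hv]

lemma bsign_ne_zero {ν τ : Finset V} (h : Facet ν τ) : bsign ν τ ≠ 0 := by
  obtain ⟨v, _, _, hv⟩ := facet_sdiff h
  rw [bsign_facet h hv]
  exact pow_ne_zero _ (by norm_num)

lemma facet_card_two {e τ : Finset V} (h : Facet e τ) (h3 : τ.card = 3) : e.card = 2 := by
  have := h.2; omega

lemma facet_nonempty {e τ : Finset V} (h : Facet e τ) (h3 : τ.card = 3) : e.Nonempty := by
  rw [← Finset.card_pos, facet_card_two h h3]; norm_num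

end Helpers

section BndLemmas

set_option linter.unusedSectionVars false

variable {V : Type*} [DecidableEq V] [LinearOrder V] (L : Finset (Finset V))

lemma bnd_add (g h : Finset V → ℝ) (e : Finset V) :
    bnd L (fun x => g x + h x) e = bnd L g e + bnd L h e := by
  simp [bnd, mul_add, Finset.sum_add_distrib]

lemma bnd_smul (r : ℝ) (g : Finset V → ℝ) (e : Finset V) :
    bnd L (fun x => r * g x) e = r * bnd L g e := by
  simp only [bnd, Finset.mul_sum]
  exact Finset.sum_congr rfl (fun x _ => by ring)

lemma bnd_sum {ι : Type*} (s : Finset ι) (g : ι → Finset V → ℝ) (e : Finset V) :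
    bnd L (fun x => ∑ i ∈ s, g i x) e = ∑ i ∈ s, bnd L (g i) e := by
  simp only [bnd, Finset.mul_sum]
  exact Finset.sum_comm

lemma bnd_ind {τ : Finset V} (hτ : τ ∈ L) (e : Finset V) :
    bnd L (fun x => if x = τ then (1:ℝ) else 0) e = bsign e τ := by
  simp only [bnd, mul_ite, mul_one, mul_zero]
  rw [Finset.sum_ite_eq' L τ (fun x => bsign e x), if_pos hτ]

lemma bnd_support {c : Finset V → ℝ} {e : Finset V} (h : bnd L c e ≠ 0) :
    ∃ τ ∈ L, Facet e τ ∧ c τ ≠ 0 := by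
  by_contra hcon
  push_neg at hcon
  apply h
  apply Finset.sum_eq_zero
  intro τ hτ
  by_cases hF : Facet e τ
  · rw [hcon τ hτ hF, mul_zero]
  · rw [bsign_of_not_facet hF, zero_mul]

end BndLemmas

section DelDel

set_option linter.unusedSectionVars false

variable {V : Type*} [DecidableEq V] [LinearOrder V]

lemma sign_cancel {a x y : V} (hax : a ≠ x) (hay : a ≠ y) (hxy : x ≠ y) :
    bsign {a} (insert a {x}) * bsign (insert a {x}) (insert a (insert x {y})) +
      bsign {a} (insert a {y}) * bsign (insert a {y}) (insert a (insert x {y})) = 0 := by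
  have hxa := hax.symm; have hya := hay.symm; have hyx := hxy.symm
  have hanx : a ∉ ({x} : Finset V) := by simp [hax]
  have hany : a ∉ ({y} : Finset V) := by simp [hay]
  have hanxy : a ∉ (insert x ({y} : Finset V)) := by simp [hax, hay]
  have hxny : x ∉ ({y} : Finset V) := by simp [hxy]
  have F1 : Facet ({a} : Finset V) (insert a {x}) := by
    constructor
    · simp
    · simp [Finset.card_insert_of_notMem hanx]
  have F2 : Facet ({a} : Finset V) (insert a {y}) := by
    constructor
    · simp
    · simp [Finset.card_insert_of_notMem hany]
  have cardτ : (insert a (insert x ({y} : Finset V))).card = 3 := by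
    rw [Finset.card_insert_of_notMem hanxy, Finset.card_insert_of_notMem hxny]
    simp
  have F3 : Facet (insert a ({x} : Finset V)) (insert a (insert x {y})) := by
    constructor
    · intro u hu; simp at hu; rcases hu with rfl | rfl <;> simp
    · rw [Finset.card_insert_of_notMem hanx, cardτ]; simp
  have F4 : Facet (insert a ({y} : Finset V)) (insert a (insert x {y})) := by
    constructor
    · intro u hu; simp at hu; rcases hu with rfl | rfl <;> simp
    · rw [Finset.card_insert_of_notMem hany, cardτ]; simp
  have S1 : insert a ({x} : Finset V) \ {a} = {x} := by
    ext u
    simp only [Finset.mem_sdiff, Finset.mem_insert, Finset.mem_singleton]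
    constructor
    · rintro ⟨h1 | h1, h2⟩ <;> tauto
    · rintro rfl; exact ⟨Or.inr rfl, hxa⟩
  have S2 : insert a ({y} : Finset V) \ {a} = {y} := by
    ext u
    simp only [Finset.mem_sdiff, Finset.mem_insert, Finset.mem_singleton]
    constructor
    · rintro ⟨h1 | h1, h2⟩ <;> tauto
    · rintro rfl; exact ⟨Or.inr rfl, hya⟩
  have S3 : insert a (insert x ({y} : Finset V)) \ insert a {x} = {y} := by
    ext u
    simp only [Finset.mem_sdiff, Finset.mem_insert, Finset.mem_singleton]
    constructor
    · rintro ⟨h1 | h1 | h1, h2⟩ <;> tauto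
    · rintro rfl; exact ⟨Or.inr (Or.inr rfl), by push_neg; exact ⟨hya, hyx⟩⟩
  have S4 : insert a (insert x ({y} : Finset V)) \ insert a {y} = {x} := by
    ext u
    simp only [Finset.mem_sdiff, Finset.mem_insert, Finset.mem_singleton]
    constructor
    · rintro ⟨h1 | h1 | h1, h2⟩ <;> tauto
    · rintro rfl; exact ⟨Or.inr (Or.inl rfl), by push_neg; exact ⟨hxa, hxy⟩⟩
  rw [bsign_facet F1 S1, bsign_facet F2 S2, bsign_facet F3 S3, bsign_facet F4 S4]
  have C1 : ((insert a ({x} : Finset V)).filter (fun u => u < x)).card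
      = (if a < x then 1 else 0) := by
    rw [Finset.card_filter, Finset.sum_insert hanx, Finset.sum_singleton]
    simp [lt_irrefl]
  have C2 : ((insert a ({y} : Finset V)).filter (fun u => u < y)).card
      = (if a < y then 1 else 0) := by
    rw [Finset.card_filter, Finset.sum_insert hany, Finset.sum_singleton]
    simp [lt_irrefl]
  have C3 : ((insert a (insert x ({y} : Finset V))).filter (fun u => u < y)).card
      = (if a < y then 1 else 0) + (if x < y then 1 else 0) := by
    rw [Finset.card_filter, Finset.sum_insert hanxy, Finset.sum_insert hxny,
      Finset.sum_singleton]
    simp [lt_irrefl]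
  have C4 : ((insert a (insert x ({y} : Finset V))).filter (fun u => u < x)).card
      = (if a < x then 1 else 0) + (if y < x then 1 else 0) := by
    rw [Finset.card_filter, Finset.sum_insert hanxy, Finset.sum_insert hxny,
      Finset.sum_singleton]
    simp [lt_irrefl]
  rw [C1, C2, C3, C4]
  rcases hxy.lt_or_gt with h | h
  · rw [if_pos h, if_neg (asymm h)]
    split_ifs <;> norm_num [pow_succ]
  · rw [if_neg (asymm h), if_pos h]
    split_ifs <;> norm_num [pow_succ]

lemma bnd_bnd (L : Finset (Finset V)) (hL : IsComplex L) {c : Finset V → ℝ}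
    (hc : IsChainOf L 2 c) (ν : Finset V) : bnd L (bnd L c) ν = 0 := by
  unfold bnd
  simp_rw [Finset.mul_sum]
  rw [Finset.sum_comm]
  apply Finset.sum_eq_zero
  intro τ hτL
  by_cases hcτ : c τ = 0
  · apply Finset.sum_eq_zero; intro e _; rw [hcτ]; ring
  have hτ3 : τ.card = 3 := (hc τ hcτ).2
  have key : (∑ e ∈ L, bsign ν e * bsign e τ) = 0 → ∑ e ∈ L, bsign ν e * (bsign e τ * c τ) = 0 := by
    intro h
    have : ∑ e ∈ L, bsign ν e * (bsign e τ * c τ) = (∑ e ∈ L, bsign ν e * bsign e τ) * c τ := by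
      rw [Finset.sum_mul]; exact Finset.sum_congr rfl (fun e _ => by ring)
    rw [this, h, zero_mul]
  apply key
  by_cases hν : ν ⊆ τ ∧ ν.card = 1
  case neg =>
    apply Finset.sum_eq_zero
    intro e _
    by_cases h1 : Facet ν e
    · by_cases h2 : Facet e τ
      · exfalso
        apply hν
        refine ⟨h1.1.trans h2.1, ?_⟩
        have := h1.2; have := h2.2; omega
      · rw [bsign_of_not_facet h2]; ring
    · rw [bsign_of_not_facet h1]; ring
  case pos =>
    obtain ⟨hsub, hcard1⟩ := hν
    obtain ⟨a, rfl⟩ := Finset.card_eq_one.mp hcard1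
    have haτ : a ∈ τ := hsub (Finset.mem_singleton_self a)
    have herase : (τ.erase a).card = 2 := by
      rw [Finset.card_erase_of_mem haτ, hτ3]
    obtain ⟨x, y, hxy, hxyeq⟩ := Finset.card_eq_two.mp herase
    have hxτ : x ∈ τ := Finset.mem_of_mem_erase (hxyeq ▸ (by simp : x ∈ ({x, y} : Finset V)))
    have hyτ : y ∈ τ := Finset.mem_of_mem_erase (hxyeq ▸ (by simp : y ∈ ({x, y} : Finset V)))
    have hax : a ≠ x := by
      intro h; subst h
      exact (Finset.notMem_erase a τ) (hxyeq ▸ (by simp : a ∈ ({a, y} : Finset V)))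
    have hay : a ≠ y := by
      intro h; subst h
      exact (Finset.notMem_erase a τ) (hxyeq ▸ (by simp : a ∈ ({x, a} : Finset V)))
    have hτeq : τ = insert a (insert x {y}) := by
      conv_lhs => rw [← Finset.insert_erase haτ, hxyeq]
    set e₁ : Finset V := insert a {x} with he₁
    set e₂ : Finset V := insert a {y} with he₂
    have he₁sub : e₁ ⊆ τ := by
      intro u hu; simp only [he₁, Finset.mem_insert, Finset.mem_singleton] at hu
      rcases hu with rfl | rfl <;> assumption
    have he₂sub : e₂ ⊆ τ := by
      intro u hu; simp only [he₂, Finset.mem_insert, Finset.mem_singleton] at hu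
      rcases hu with rfl | rfl <;> assumption
    have he₁L : e₁ ∈ L := hL.2 τ hτL e₁ he₁sub ⟨a, by simp [he₁]⟩
    have he₂L : e₂ ∈ L := hL.2 τ hτL e₂ he₂sub ⟨a, by simp [he₂]⟩
    have hne : e₁ ≠ e₂ := by
      intro h
      have : x ∈ e₂ := h ▸ (by simp [he₁] : x ∈ e₁)
      simp only [he₂, Finset.mem_insert, Finset.mem_singleton] at this
      tauto
    have hpairsub : ({e₁, e₂} : Finset (Finset V)) ⊆ L := by
      intro u hu; simp only [Finset.mem_insert, Finset.mem_singleton] at hu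
      rcases hu with rfl | rfl <;> assumption
    rw [← Finset.sum_subset hpairsub ?van]
    case van =>
      intro e heL henot
      by_cases h1 : Facet {a} e
      · by_cases h2 : Facet e τ
        · exfalso
          apply henot
          have hae : a ∈ e := h1.1 (Finset.mem_singleton_self a)
          have hecard : e.card = 2 := by have := h1.2; simp at this; omega
          have herase1 : (e.erase a).card = 1 := by rw [Finset.card_erase_of_mem hae, hecard]
          obtain ⟨z, hz⟩ := Finset.card_eq_one.mp herase1
          have hze : z ∈ e.erase a := hz ▸ Finset.mem_singleton_self z
          have hzτ : z ∈ τ.erase a := by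
            rw [Finset.mem_erase] at hze ⊢
            exact ⟨hze.1, h2.1 hze.2⟩
          have heeq : e = insert a {z} := by
            rw [← Finset.insert_erase hae, hz]
          rw [hxyeq] at hzτ
          simp only [Finset.mem_insert, Finset.mem_singleton] at hzτ ⊢
          rcases hzτ with rfl | rfl
          · left; rw [heeq]
          · right; rw [heeq]
        · rw [bsign_of_not_facet h2]; ring
      · rw [bsign_of_not_facet h1]; ring
    rw [Finset.sum_pair hne, hτeq]
    exact sign_cancel hax hay hxy

end DelDel

section MorseLemmas

set_option linter.unusedSectionVars false

variable {V : Type*} [DecidableEq V] [LinearOrder V]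
variable {L : Finset (Finset V)} {f : Finset V → ℝ}

/-- Uniqueness of the cofacet pairing. -/
lemma up_unique (hf : IsMorse L f) {e τ₁ τ₂ : Finset V} (heL : e ∈ L)
    (h1L : τ₁ ∈ L) (h2L : τ₂ ∈ L) (h1 : Facet e τ₁) (g1 : f τ₁ ≤ f e)
    (h2 : Facet e τ₂) (g2 : f τ₂ ≤ f e) : τ₁ = τ₂ := by
  have hcard := (hf e heL).1
  have m1 : τ₁ ∈ L.filter (fun τ => Facet e τ ∧ f τ ≤ f e) :=
    Finset.mem_filter.mpr ⟨h1L, h1, g1⟩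
  have m2 : τ₂ ∈ L.filter (fun τ => Facet e τ ∧ f τ ≤ f e) :=
    Finset.mem_filter.mpr ⟨h2L, h2, g2⟩
  exact Finset.card_le_one.mp hcard _ m1 _ m2

/-- Uniqueness of the facet pairing. -/
lemma down_unique (hf : IsMorse L f) {σ ν₁ ν₂ : Finset V} (hσL : σ ∈ L)
    (h1L : ν₁ ∈ L) (h2L : ν₂ ∈ L) (h1 : Facet ν₁ σ) (g1 : f σ ≤ f ν₁)
    (h2 : Facet ν₂ σ) (g2 : f σ ≤ f ν₂) : ν₁ = ν₂ := by
  have hcard := (hf σ hσL).2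
  have m1 : ν₁ ∈ L.filter (fun ν => Facet ν σ ∧ f σ ≤ f ν) :=
    Finset.mem_filter.mpr ⟨h1L, h1, g1⟩
  have m2 : ν₂ ∈ L.filter (fun ν => Facet ν σ ∧ f σ ≤ f ν) :=
    Finset.mem_filter.mpr ⟨h2L, h2, g2⟩
  exact Finset.card_le_one.mp hcard _ m1 _ m2

/-- Prepending a step to a reachability witness. -/
lemma reach_step {τ τ' e' e : Finset V} (hτ'L : τ' ∈ L) (he'L : e' ∈ L)
    (he'τ : Facet e' τ) (he'τ' : Facet e' τ') (hfle : f τ' ≤ f e')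
    (h : ∃ σ'' p, σ'' ∈ L ∧ Facet σ'' τ' ∧ GPath L f σ'' e p) :
    ∃ σ' p, σ' ∈ L ∧ Facet σ' τ ∧ GPath L f σ' e p := by
  obtain ⟨σ'', p, hσ''L, hσ''τ', hp⟩ := h
  by_cases hcase : σ'' = e'
  · subst hcase
    exact ⟨σ'', p, hσ''L, he'τ, hp⟩
  · exact ⟨e', e' :: τ' :: p, he'L, he'τ,
      GPath.cons e' τ' σ'' e p he'L hτ'L he'τ' hfle hσ''τ' hcase hp⟩

end MorseLemmas

section ChainConstruction

set_option linter.unusedSectionVars false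

variable {V : Type*} [DecidableEq V] [LinearOrder V]

/-- The properties of the "gradient flow" 2-chain attached to a triangle `τ`. -/
structure ChainProp (L : Finset (Finset V)) (f : Finset V → ℝ) (τ : Finset V)
    (c : Finset V → ℝ) : Prop where
  chain : IsChainOf L 2 c
  self : c τ = 1
  supp : ∀ x, c x ≠ 0 → x = τ ∨ f x < f τ
  crit : ∀ x, IsCritical L f x → x ≠ τ → c x = 0
  upzero : ∀ e τ'', τ'' ∈ L → Facet e τ'' → f τ'' ≤ f e → τ'' ≠ τ → bnd L c e = 0
  top : ∀ e, Facet e τ → f τ ≤ f e → bnd L c e = bsign e τ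
  reach : ∀ e, IsCritical L f e → bnd L c e ≠ 0 →
    ∃ σ' p, σ' ∈ L ∧ Facet σ' τ ∧ GPath L f σ' e p

lemma exists_chain (L : Finset (Finset V)) (f : Finset V → ℝ)
    (hL : IsComplex L) (hf : IsMorse L f) :
    ∀ τ, τ ∈ L → τ.card = 3 → ∃ c, ChainProp L f τ c := by
  classical
  suffices H : ∀ n τ, τ ∈ L → τ.card = 3 →
      (L.filter (fun ρ => ρ.card = 3 ∧ f ρ < f τ)).card = n → ∃ c, ChainProp L f τ c by
    exact fun τ h1 h2 => H _ τ h1 h2 rfl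
  intro n
  induction n using Nat.strong_induction_on with
  | _ n IH =>
  intro τ hτL hτ3 hn
  set T : Finset (Finset V) :=
    L.filter (fun τ' => τ'.card = 3 ∧ τ' ≠ τ ∧
      ∃ e, e ∈ L ∧ Facet e τ ∧ Facet e τ' ∧ f τ' ≤ f e) with hT
  have hTfacts : ∀ t ∈ T, t ∈ L ∧ t.card = 3 ∧ t ≠ τ ∧
      ∃ e, e ∈ L ∧ Facet e τ ∧ Facet e t ∧ f t ≤ f e := by
    intro t ht; rw [hT, Finset.mem_filter] at ht; tauto
  have hTlt : ∀ t ∈ T, f t < f τ := by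
    intro t ht
    obtain ⟨htL, ht3, htne, e, heL, heτ, het, hfe⟩ := hTfacts t ht
    by_contra hcon
    push_neg at hcon
    exact htne (up_unique hf heL htL hτL het hfe heτ (hcon.trans hfe))
  have hstep : ∀ t : {x // x ∈ T}, ∃ e, e ∈ L ∧ Facet e τ ∧ Facet e t.1 ∧ f t.1 ≤ f e :=
    fun t => (hTfacts t.1 t.2).2.2.2
  choose E hEL hEτ hEt hEf using hstep
  have hIH : ∀ t : {x // x ∈ T}, ∃ c, ChainProp L f t.1 c := by
    intro t
    obtain ⟨htL, ht3, htne, _⟩ := hTfacts t.1 t.2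
    have hlt : (L.filter (fun ρ => ρ.card = 3 ∧ f ρ < f t.1)).card < n := by
      rw [← hn]
      apply Finset.card_lt_card
      rw [Finset.ssubset_def]
      constructor
      · intro ρ hρ
        rw [Finset.mem_filter] at hρ ⊢
        exact ⟨hρ.1, hρ.2.1, hρ.2.2.trans (hTlt t.1 t.2)⟩
      · intro hsup
        have hmem : t.1 ∈ L.filter (fun ρ => ρ.card = 3 ∧ f ρ < f τ) :=
          Finset.mem_filter.mpr ⟨htL, ht3, hTlt _ t.2⟩
        have := hsup hmem
        rw [Finset.mem_filter] at this
        exact absurd this.2.2 (lt_irrefl _)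
    exact IH _ hlt t.1 htL ht3 rfl
  choose d hd using hIH
  set lam : {x // x ∈ T} → ℝ := fun t => -(bsign (E t) τ) / (bsign (E t) t.1) with hlam
  set c : Finset V → ℝ :=
    fun x => (if x = τ then 1 else 0) + ∑ t ∈ T.attach, lam t * d t x with hc
  have hbndc : ∀ e, bnd L c e = bsign e τ + ∑ t ∈ T.attach, lam t * bnd L (d t) e := by
    intro e
    rw [hc, bnd_add, bnd_ind L hτL e, bnd_sum]
    congr 1
    exact Finset.sum_congr rfl fun t _ => bnd_smul L (lam t) (d t) e
  refine ⟨c, ?chain, ?selfv, ?supp, ?crit, ?upzero, ?top, ?reach⟩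
  case selfv =>
    have hz : ∑ t ∈ T.attach, lam t * d t τ = 0 := by
      apply Finset.sum_eq_zero
      intro t _
      have hdz : d t τ = 0 := by
        by_contra h
        rcases (hd t).supp τ h with h1 | h1
        · exact (hTfacts t.1 t.2).2.2.1 h1.symm
        · exact absurd (hTlt t.1 t.2) (lt_asymm h1)
      rw [hdz, mul_zero]
    simp only [hc]
    rw [hz, add_zero]; simp
  case chain =>
    intro x hx
    simp only [hc] at hx
    by_cases hxτ : x = τ
    · subst hxτ; exact ⟨hτL, by omega⟩
    · rw [if_neg hxτ, zero_add] at hx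
      obtain ⟨t, _, hterm⟩ := Finset.exists_ne_zero_of_sum_ne_zero hx
      have : d t x ≠ 0 := fun h => hterm (by rw [h, mul_zero])
      exact (hd t).chain x this
  case supp =>
    intro x hx
    by_cases hxτ : x = τ
    · exact Or.inl hxτ
    · right
      simp only [hc] at hx
      rw [if_neg hxτ, zero_add] at hx
      obtain ⟨t, _, hterm⟩ := Finset.exists_ne_zero_of_sum_ne_zero hx
      have hdx : d t x ≠ 0 := fun h => hterm (by rw [h, mul_zero])
      rcases (hd t).supp x hdx with h1 | h1
      · exact h1 ▸ hTlt t.1 t.2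
      · exact h1.trans (hTlt t.1 t.2)
  case crit =>
    intro x hx hne
    simp only [hc]
    rw [if_neg hne, zero_add]
    apply Finset.sum_eq_zero
    intro t _
    have hxt : x ≠ t.1 := by
      intro h
      have := hx.2.2 (E t) (hEL t) (h ▸ hEt t)
      exact absurd (hEf t) (not_le.mpr (h ▸ this))
    rw [(hd t).crit x hx hxt, mul_zero]
  case upzero =>
    intro e τ'' hτ''L heτ'' hfe hneτ
    rw [hbndc e]
    by_cases hFa : Facet e τ
    · have heL : e ∈ L := hL.2 τ hτL e hFa.1 (facet_nonempty hFa hτ3)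
      have he2 : e.card = 2 := facet_card_two hFa hτ3
      have hτ''3 : τ''.card = 3 := by have := heτ''.2; omega
      have hτ''T : τ'' ∈ T := by
        rw [hT, Finset.mem_filter]
        exact ⟨hτ''L, hτ''3, hneτ, e, heL, hFa, heτ'', hfe⟩
      set t₀ : {x // x ∈ T} := ⟨τ'', hτ''T⟩ with ht₀
      have heE : e = E t₀ :=
        down_unique hf hτ''L heL (hEL t₀) heτ'' hfe (hEt t₀) (hEf t₀)
      rw [Finset.sum_eq_single_of_mem t₀ (Finset.mem_attach T t₀) ?other]
      case other =>
        intro t _ htne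
        have hne : τ'' ≠ t.1 := fun h => htne (Subtype.ext h.symm)
        rw [(hd t).upzero e τ'' hτ''L heτ'' hfe hne, mul_zero]
      have hbndt₀ : bnd L (d t₀) e = bsign e τ'' := (hd t₀).top e heτ'' hfe
      have hbne : bsign e τ'' ≠ 0 := bsign_ne_zero heτ''
      rw [hbndt₀]
      simp only [hlam, ← heE]
      field_simp
      simp [ht₀, div_self hbne]
    · rw [bsign_of_not_facet hFa, zero_add]
      apply Finset.sum_eq_zero
      intro t _
      have hne : τ'' ≠ t.1 := by
        intro h
        have htL := (hTfacts t.1 t.2).1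
        have ht3 := (hTfacts t.1 t.2).2.1
        have heL : e ∈ L := hL.2 τ'' hτ''L e heτ''.1 (facet_nonempty heτ'' (by rw [h]; exact ht3))
        have heE : e = E t := by
          apply down_unique hf (h ▸ hτ''L) heL (hEL t) (h ▸ heτ'') (h ▸ hfe) (hEt t) (hEf t)
        exact hFa (heE ▸ hEτ t)
      rw [(hd t).upzero e τ'' hτ''L heτ'' hfe hne, mul_zero]
  case top =>
    intro e heτ hfe
    rw [hbndc e]
    have : ∑ t ∈ T.attach, lam t * bnd L (d t) e = 0 := by
      apply Finset.sum_eq_zero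
      intro t _
      have hne : τ ≠ t.1 := fun h => (hTfacts t.1 t.2).2.2.1 h.symm
      rw [(hd t).upzero e τ hτL heτ hfe hne, mul_zero]
    rw [this, add_zero]
  case reach =>
    intro e hecrit hne0
    rw [hbndc e] at hne0
    by_cases hFa : Facet e τ
    · exact ⟨e, [e], hecrit.1, hFa, GPath.nil e hecrit.1⟩
    · rw [bsign_of_not_facet hFa, zero_add] at hne0
      obtain ⟨t, _, hterm⟩ := Finset.exists_ne_zero_of_sum_ne_zero hne0
      have hdt : bnd L (d t) e ≠ 0 := fun h => hterm (by rw [h, mul_zero])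
      exact reach_step (hTfacts t.1 t.2).1 (hEL t) (hEτ t) (hEt t) (hEf t)
        ((hd t).reach e hecrit hdt)

end ChainConstruction

/-- For a finite connected 2-complex with `H₂(L;ℝ) = 0`, the bipartite graph
joining critical edges to critical 2-simplices through gradient paths admits a matching
saturating the critical 2-simplices. -/
theorem matching_saturating_critical_two_simplices {V : Type*} [DecidableEq V] [LinearOrder V]
    (L : Finset (Finset V)) (hL : IsComplex L) (hconn : ComplexConnected L)
    (hdim : ∀ σ ∈ L, σ.card ≤ 3) (hH2 : H2Zero L)
    (f : Finset V → ℝ) (hf : IsMorse L f) :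
    ∃ m : Finset V → Finset V,
      Set.InjOn m ↑(L.filter (fun σ => IsCritical L f σ ∧ σ.card = 3)) ∧
      ∀ σ ∈ L.filter (fun σ => IsCritical L f σ ∧ σ.card = 3),
        m σ ∈ L.filter (fun e => IsCritical L f e ∧ e.card = 2) ∧
        ∃ (σ' : Finset V) (p : List (Finset V)),
          σ' ∈ L ∧ Facet σ' σ ∧ GPath L f σ' (m σ) p := by
  classical
  set B := L.filter (fun σ => IsCritical L f σ ∧ σ.card = 3) with hB
  set A := L.filter (fun e => IsCritical L f e ∧ e.card = 2) with hA
  set N : Finset V → Finset (Finset V) :=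
    fun σ => A.filter (fun e => ∃ σ' p, σ' ∈ L ∧ Facet σ' σ ∧ GPath L f σ' e p) with hN
  have hBfacts : ∀ σ ∈ B, σ ∈ L ∧ IsCritical L f σ ∧ σ.card = 3 := by
    intro σ h; rw [hB, Finset.mem_filter] at h; tauto
  have hcc : ∀ s : {x // x ∈ B}, ∃ c, ChainProp L f s.1 c := fun s =>
    exists_chain L f hL hf s.1 (hBfacts s.1 s.2).1 (hBfacts s.1 s.2).2.2
  choose cf hcf using hcc
  have hall : ∀ s : Finset {x // x ∈ B}, s.card ≤ (s.biUnion (fun x => N x.1)).card := by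
    intro s
    by_contra hlt
    push_neg at hlt
    set W := s.biUnion (fun x => N x.1) with hW
    set v : {y // y ∈ s} → ({e // e ∈ W} → ℝ) := fun i => fun e => bnd L (cf i.1) e.1 with hv
    have hnli : ¬ LinearIndependent ℝ v := by
      intro hli
      have h1 := hli.fintype_card_le_finrank
      rw [Module.finrank_fintype_fun_eq_card] at h1
      simp only [Fintype.card_coe] at h1
      exact absurd h1 (not_le.mpr hlt)
    obtain ⟨g, hg0, i₀, hgi₀⟩ := Fintype.not_linearIndependent_iff.mp hnli
    set cc : Finset V → ℝ := fun x => ∑ i : {y // y ∈ s}, g i * cf i.1 x with hccdef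
    have hchain : IsChainOf L 2 cc := by
      intro x hx
      simp only [hccdef] at hx
      obtain ⟨i, _, hterm⟩ := Finset.exists_ne_zero_of_sum_ne_zero hx
      exact (hcf i.1).chain x (fun h => hterm (by rw [h, mul_zero]))
    have hbcc : ∀ e, bnd L cc e = ∑ i : {y // y ∈ s}, g i * bnd L (cf i.1) e := by
      intro e
      rw [hccdef, bnd_sum]
      exact Finset.sum_congr rfl fun i _ => bnd_smul L _ _ e
    have hker : ∀ e, e ∈ W → bnd L cc e = 0 := by
      intro e he
      have h2 := congrFun hg0 ⟨e, he⟩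
      simp only [Finset.sum_apply, Pi.smul_apply, smul_eq_mul, Pi.zero_apply, hv] at h2
      rw [hbcc]; exact h2
    have hedge : ∀ e, bnd L cc e ≠ 0 → e ∈ L ∧ e.card = 2 := by
      intro e h
      obtain ⟨ρ, hρL, hFa, hccρ⟩ := bnd_support L h
      have hρ3 : ρ.card = 3 := (hchain ρ hccρ).2
      exact ⟨hL.2 ρ hρL e hFa.1 (facet_nonempty hFa hρ3), facet_card_two hFa hρ3⟩
    have hdown : ∀ e, bnd L cc e ≠ 0 → ∃ ν ∈ L, Facet ν e ∧ f e ≤ f ν := by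
      intro e h
      have heL := (hedge e h).1
      have he2 := (hedge e h).2
      by_cases hecrit : IsCritical L f e
      · exfalso
        by_cases hex : ∃ i : {y // y ∈ s}, bnd L (cf i.1) e ≠ 0
        · obtain ⟨i, hi⟩ := hex
          have hre := (hcf i.1).reach e hecrit hi
          have heW : e ∈ W := by
            rw [hW, Finset.mem_biUnion]
            refine ⟨i.1, i.2, ?_⟩
            simp only [hN]
            exact Finset.mem_filter.mpr ⟨Finset.mem_filter.mpr ⟨heL, hecrit, he2⟩, hre⟩
          exact h (hker e heW)
        · push_neg at hex
          apply h
          rw [hbcc]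
          exact Finset.sum_eq_zero fun i _ => by rw [hex i, mul_zero]
      · have hnc : ¬((∀ τ ∈ L, Facet e τ → f e < f τ) ∧ (∀ ν ∈ L, Facet ν e → f ν < f e)) :=
          fun hcon => hecrit ⟨heL, hcon.1, hcon.2⟩
        rcases not_and_or.mp hnc with h1 | h1
        · push_neg at h1
          obtain ⟨τ', hτ'L, hFa', hle⟩ := h1
          exfalso
          apply h
          rw [hbcc]
          apply Finset.sum_eq_zero
          intro i _
          have hneq : τ' ≠ i.1.1 := by
            intro hh
            have hcriti := (hBfacts i.1.1 i.1.2).2.1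
            have h3 : f e < f τ' := by rw [hh]; exact hcriti.2.2 e heL (hh ▸ hFa')
            exact absurd hle (not_le.mpr h3)
          rw [(hcf i.1).upzero e τ' hτ'L hFa' hle hneq, mul_zero]
        · push_neg at h1
          obtain ⟨ν, hνL, hνe, hle⟩ := h1
          exact ⟨ν, hνL, hνe, hle⟩
    have hzero : ∀ e, bnd L cc e = 0 := by
      by_contra hcon
      push_neg at hcon
      obtain ⟨e₀, he₀⟩ := hcon
      obtain ⟨ν₀, hν₀L, hν₀e, hν₀f⟩ := hdown e₀ he₀
      set P := (L ×ˢ L).filter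
        (fun q => bnd L cc q.2 ≠ 0 ∧ Facet q.1 q.2 ∧ f q.2 ≤ f q.1) with hP
      have hPne : P.Nonempty := ⟨(ν₀, e₀), by
        rw [hP, Finset.mem_filter]
        exact ⟨Finset.mem_product.mpr ⟨hν₀L, (hedge e₀ he₀).1⟩, he₀, hν₀e, hν₀f⟩⟩
      obtain ⟨q, hqP, hqmax⟩ := Finset.exists_max_image P (fun q => f q.1) hPne
      rw [hP, Finset.mem_filter, Finset.mem_product] at hqP
      obtain ⟨⟨hq1L, hq2L⟩, hqbnd, hqFa, hqf⟩ := hqP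
      have hdd := bnd_bnd L hL hchain q.1
      have hexp : bnd L (bnd L cc) q.1 = ∑ e ∈ L, bsign q.1 e * bnd L cc e := rfl
      rw [hexp, Finset.sum_eq_single_of_mem q.2 hq2L ?vanish] at hdd
      case vanish =>
        intro e' he'L he'ne
        by_cases hb : bnd L cc e' = 0
        · rw [hb, mul_zero]
        · by_cases hb2 : Facet q.1 e'
          · exfalso
            obtain ⟨ν', hν'L, hν'e', hν'f⟩ := hdown e' hb
            have hmem : (ν', e') ∈ P := by
              rw [hP, Finset.mem_filter]
              exact ⟨Finset.mem_product.mpr ⟨hν'L, he'L⟩, hb, hν'e', hν'f⟩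
            have hle' : f ν' ≤ f q.1 := hqmax _ hmem
            by_cases hc2 : f e' ≤ f q.1
            · exact he'ne (up_unique hf hq1L he'L hq2L hb2 hc2 hqFa hqf)
            · push_neg at hc2
              exact absurd (hν'f.trans hle') (not_le.mpr hc2)
          · rw [bsign_of_not_facet hb2, zero_mul]
      exact (mul_ne_zero (bsign_ne_zero hqFa) hqbnd) hdd
    have hcc0 := hH2 cc hchain hzero
    have hval : cc i₀.1.1 = g i₀ := by
      simp only [hccdef]
      rw [Finset.sum_eq_single_of_mem i₀ (Finset.mem_univ i₀) ?van2]
      · rw [(hcf i₀.1).self, mul_one]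
      case van2 =>
        intro i _ hine
        have hne : i₀.1.1 ≠ i.1.1 := fun hh => hine (Subtype.ext (Subtype.ext hh.symm))
        rw [(hcf i.1).crit i₀.1.1 (hBfacts i₀.1.1 i₀.1.2).2.1 hne, mul_zero]
    exact hgi₀ (by rw [← hval]; exact hcc0 _)
  obtain ⟨mf, hmfinj, hmfmem⟩ :=
    (Finset.all_card_le_biUnion_card_iff_existsInjective'
      (fun x : {x // x ∈ B} => N x.1)).mp hall
  refine ⟨fun x => if h : x ∈ B then mf ⟨x, h⟩ else ∅, ?_, ?_⟩
  · intro x hx y hy hxy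
    rw [Finset.mem_coe] at hx hy
    simp only [dif_pos hx, dif_pos hy] at hxy
    exact congrArg Subtype.val (hmfinj hxy)
  · intro σ hσ
    have hσB : σ ∈ B := hσ
    simp only [dif_pos hσB]
    have hmem := hmfmem ⟨σ, hσB⟩
    simp only [hN] at hmem
    obtain ⟨hmA, σ', p, hσ'L, hFa, hp⟩ := Finset.mem_filter.mp hmem
    exact ⟨hmA, σ', p, hσ'L, hFa, hp⟩
end
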